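/- arXiv:cs/0702113 — 9 statements merged into one kernel-verified Lean document; each statement's English description precedes it below -/
import Mathlib

section
/- Let G = (V, E) be a finite connected undirected simple graph and let e, f be two distinct edges, neither of which is a cut edge. If {e, f} is a cut pair, then every binary circulation of G contains either both of e, f or neither of them. If {e, f} is not a cut pair, then exactly half of the binary circulations of G contain exactly one of e and f. -/
open scoped Classical symmDiff

noncomputable section

variable {V : Type*}

/-- The induced edge cut `δ(S)`: the edges of `G` with exactly one endpoint in `S`. -/
def edgeCut [Fintype V] (G : SimpleGraph V) (S : Set V) : Finset (Sym2 V) :=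
  G.edgeFinset.filter fun e => ∀ u v : V, e = s(u, v) → (u ∈ S ↔ v ∉ S)

/-- `φ` is a binary circulation of `G`: a set of edges of `G` in which every vertex
has even degree. -/
def IsCirculation [Fintype V] (G : SimpleGraph V) (φ : Finset (Sym2 V)) : Prop :=
  ↑φ ⊆ G.edgeSet ∧ ∀ v : V, Even ((φ.filter fun e => v ∈ e).card)

/-- The characteristic vector of an edge set, as an element of `(ZMod 2)^E`. -/
def chi [Fintype V] (G : SimpleGraph V) (F : Finset (Sym2 V)) : G.edgeSet → ZMod 2 :=
  fun e => if ↑e ∈ F then 1 else 0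

/-- `e` is a cut edge of `G`: removing it disconnects `G`. -/
def IsCutEdge (G : SimpleGraph V) (e : Sym2 V) : Prop :=
  e ∈ G.edgeSet ∧ ¬(G.deleteEdges {e}).Connected

/-- `{e, f}` is a cut pair of `G`: two distinct edges, neither a cut edge, whose
joint removal disconnects `G`. -/
def IsCutPair (G : SimpleGraph V) (e f : Sym2 V) : Prop :=
  e ≠ f ∧ e ∈ G.edgeSet ∧ f ∈ G.edgeSet ∧ ¬IsCutEdge G e ∧ ¬IsCutEdge G f ∧
    ¬(G.deleteEdges {e, f}).Connected

/-- `v` is a cut vertex of `G`: deleting `v` and its incident edges disconnects `G`. -/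
def IsCutVertex (G : SimpleGraph V) (v : V) : Prop :=
  ¬(G.induce {u | u ≠ v}).Connected

/-- `T` is a spanning tree of `G`. -/
def IsSpanningTree (G T : SimpleGraph V) : Prop := T ≤ G ∧ T.IsTree

/-- `K` is a cut class of `G`: an inclusion-maximal set of more than one edge,
every two of which form a cut pair. -/
def IsCutClass (G : SimpleGraph V) (K : Finset (Sym2 V)) : Prop :=
  1 < K.card ∧ (∀ e ∈ K, ∀ f ∈ K, e ≠ f → IsCutPair G e f) ∧
    ∀ K' : Finset (Sym2 V), K ⊆ K' →
      (1 < K'.card ∧ ∀ e ∈ K', ∀ f ∈ K', e ≠ f → IsCutPair G e f) → K' = K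


/-! ### Auxiliary lemmas -/

private lemma aux_cross_iff {S : Set V} {u v : V} :
    (∀ a b : V, s(u, v) = s(a, b) → (a ∈ S ↔ b ∉ S)) ↔ (u ∈ S ↔ v ∉ S) := by
  constructor
  · intro h; exact h u v rfl
  · intro h a b hab
    rw [Sym2.eq_iff] at hab
    rcases hab with ⟨rfl, rfl⟩ | ⟨rfl, rfl⟩
    · exact h
    · tauto

private lemma aux_reach_side {H : SimpleGraph V} {S : Set V}
    (h : ∀ u v : V, H.Adj u v → (u ∈ S ↔ v ∈ S)) {x y : V} (hr : H.Reachable x y) :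
    x ∈ S ↔ y ∈ S := by
  obtain ⟨w⟩ := hr
  induction w with
  | nil => exact Iff.rfl
  | cons h' _ ih => exact (h _ _ h').trans ih

private lemma aux_toFinset_filter_card {α : Type*} [DecidableEq α] (l : List α) (h : l.Nodup)
    (p : α → Prop) [DecidablePred p] :
    ((l.toFinset).filter p).card = l.countP (fun a => p a) := by
  rw [List.countP_eq_length_filter,
    ← List.toFinset_card_of_nodup (h.filter _), List.toFinset_filter]
  congr 1
  ext x
  simp

private lemma aux_filter_symmDiff {α : Type*} [DecidableEq α] (a b : Finset α) (p : α → Prop)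
    [DecidablePred p] : (a ∆ b).filter p = (a.filter p) ∆ (b.filter p) := by
  ext x
  simp only [Finset.mem_symmDiff, Finset.mem_filter]
  tauto

private lemma aux_card_symmDiff_even {α : Type*} [DecidableEq α] {a b : Finset α}
    (ha : Even a.card) (hb : Even b.card) : Even ((a ∆ b).card) := by
  have h1 : (a ∆ b).card = (a ∪ b).card - (a ∩ b).card := by
    rw [symmDiff_eq_sup_sdiff_inf, Finset.sup_eq_union, Finset.inf_eq_inter]
    exact Finset.card_sdiff_of_subset (Finset.inter_subset_union)
  have h2 : (a ∪ b).card + (a ∩ b).card = a.card + b.card := Finset.card_union_add_card_inter a b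
  have h3 : (a ∩ b).card ≤ (a ∪ b).card :=
    Finset.card_le_card Finset.inter_subset_union
  rw [Nat.even_iff] at ha hb ⊢
  omega

/-- Circulations are closed under symmetric difference. -/
private lemma aux_isCirculation_symmDiff [Fintype V] {G : SimpleGraph V}
    {φ ψ : Finset (Sym2 V)} (hφ : IsCirculation G φ) (hψ : IsCirculation G ψ) :
    IsCirculation G (φ ∆ ψ) := by
  constructor
  · intro x hx
    simp only [Finset.coe_symmDiff, Set.mem_symmDiff] at hx
    rcases hx with ⟨hx, -⟩ | ⟨hx, -⟩
    · exact hφ.1 hx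
    · exact hψ.1 hx
  · intro v
    rw [aux_filter_symmDiff]
    exact aux_card_symmDiff_even (hφ.2 v) (hψ.2 v)

/-- The crossing edges of `φ` with respect to `S`, with a pinned decidability instance. -/
private def crossFilter [Fintype V] (S : Set V) (φ : Finset (Sym2 V)) : Finset (Sym2 V) :=
  @Finset.filter _ (fun ed => ∀ u v : V, ed = s(u, v) → (u ∈ S ↔ v ∉ S))
    (Classical.decPred _) φ

/-- A circulation meets any edge cut of the graph in an even number of edges. -/
private lemma aux_circ_cut_even [Fintype V] {G : SimpleGraph V} {φ : Finset (Sym2 V)}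
    (hφ : IsCirculation G φ) (S : Set V) :
    Even ((crossFilter S φ).card) := by
  classical
  set P : Sym2 V → Prop := fun ed => ∀ u v : V, ed = s(u, v) → (u ∈ S ↔ v ∉ S) with hP
  have hcfeq : crossFilter S φ = φ.filter P := by
    ext x
    simp only [crossFilter, Finset.mem_filter, hP]
  rw [hcfeq]
  rw [← ZMod.natCast_eq_zero_iff_even]
  have key : ∀ ed ∈ φ, ((S.toFinset.filter (· ∈ ed)).card : ZMod 2)
      = if P ed then 1 else 0 := by
    intro ed hed
    have hedE : ed ∈ G.edgeSet := hφ.1 hed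
    induction ed with
    | _ u v =>
      have hadj : G.Adj u v := hedE
      have huv : u ≠ v := hadj.ne
      have hfil : S.toFinset.filter (· ∈ s(u, v)) = ({u, v} : Finset V).filter (· ∈ S) := by
        ext x
        simp only [Finset.mem_filter, Set.mem_toFinset, Sym2.mem_iff, Finset.mem_insert,
          Finset.mem_singleton]
        tauto
      have hPiff : P s(u, v) ↔ (u ∈ S ↔ v ∉ S) := aux_cross_iff
      rw [hfil]
      by_cases hu : u ∈ S <;> by_cases hv : v ∈ S
      · rw [if_neg (by rw [hPiff]; tauto)]
        have : ({u, v} : Finset V).filter (· ∈ S) = {u, v} := by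
          ext x
          simp only [Finset.mem_filter, Finset.mem_insert, Finset.mem_singleton]
          constructor
          · tauto
          · rintro (rfl | rfl) <;> simp [hu, hv]
        rw [this, Finset.card_insert_of_notMem (by simpa using huv), Finset.card_singleton]
        decide
      · rw [if_pos (by rw [hPiff]; tauto)]
        have : ({u, v} : Finset V).filter (· ∈ S) = {u} := by
          ext x
          simp only [Finset.mem_filter, Finset.mem_insert, Finset.mem_singleton]
          constructor
          · rintro ⟨rfl | rfl, hx⟩
            · rfl
            · exact absurd hx hv
          · rintro rfl; exact ⟨Or.inl rfl, hu⟩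
        rw [this, Finset.card_singleton]; rfl
      · rw [if_pos (by rw [hPiff]; tauto)]
        have : ({u, v} : Finset V).filter (· ∈ S) = {v} := by
          ext x
          simp only [Finset.mem_filter, Finset.mem_insert, Finset.mem_singleton]
          constructor
          · rintro ⟨rfl | rfl, hx⟩
            · exact absurd hx hu
            · rfl
          · rintro rfl; exact ⟨Or.inr rfl, hv⟩
        rw [this, Finset.card_singleton]; rfl
      · rw [if_neg (by rw [hPiff]; tauto)]
        have : ({u, v} : Finset V).filter (· ∈ S) = ∅ := by
          ext x
          simp only [Finset.mem_filter, Finset.mem_insert, Finset.mem_singleton,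
            Finset.notMem_empty, iff_false, not_and]
          rintro (rfl | rfl) <;> assumption
        rw [this, Finset.card_empty]; rfl
  have hdouble : ∑ ed ∈ φ, ((S.toFinset.filter (· ∈ ed)).card : ZMod 2)
      = ∑ x ∈ S.toFinset, (((φ.filter fun ed => x ∈ ed).card : ℕ) : ZMod 2) := by
    simp only [Finset.card_filter]
    push_cast
    rw [Finset.sum_comm]
  have hzero : ∑ ed ∈ φ, ((S.toFinset.filter (· ∈ ed)).card : ZMod 2) = 0 := by
    rw [hdouble]
    apply Finset.sum_eq_zero
    intro x _
    rw [ZMod.natCast_eq_zero_iff_even]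
    exact hφ.2 x
  calc (((φ.filter P).card : ℕ) : ZMod 2)
      = ∑ ed ∈ φ, if P ed then (1 : ZMod 2) else 0 := (Finset.sum_boole _ _).symm
    _ = ∑ ed ∈ φ, ((S.toFinset.filter (· ∈ ed)).card : ZMod 2) :=
        (Finset.sum_congr rfl fun ed hed => (key ed hed).symm)
    _ = 0 := hzero

/-- If `G.deleteEdges {e, f}` is connected and `e` is an edge, there is a circulation
containing `e` but not `f`. -/
private lemma aux_exists_circ [Fintype V] {G : SimpleGraph V} {e f : Sym2 V} (hef : e ≠ f)
    (he : e ∈ G.edgeSet) (hconn : (G.deleteEdges {e, f}).Connected) :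
    ∃ ψ : Finset (Sym2 V), IsCirculation G ψ ∧ e ∈ ψ ∧ f ∉ ψ := by
  classical
  induction e with
  | _ u v =>
  have hadj : G.Adj u v := he
  obtain ⟨w⟩ := hconn.preconnected v u
  set G' := G.deleteEdges {s(u, v), f} with hG'
  have hle : G' ≤ G := G.deleteEdges_le _
  set p : G'.Walk v u := w.toPath.val with hp
  have hpedges : ∀ x ∈ (p.mapLe hle).edges, x ∈ G'.edgeSet := by
    intro x hx
    have hx' : x ∈ p.edges := by
      have : (p.mapLe hle).edges = p.edges := by
        simp only [SimpleGraph.Walk.mapLe, SimpleGraph.Walk.edges_map]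
        have hid : (Sym2.map ⇑(SimpleGraph.Hom.ofLE hle)) = id := by
          funext z; induction z with | _ a b => rfl
        rw [hid, List.map_id]
      rwa [this] at hx
    exact p.edges_subset_edgeSet hx'
  set q : G.Walk v u := p.mapLe hle with hq
  have hqpath : q.IsPath := (w.toPath.prop).mapLe hle
  set c : G.Walk u u := SimpleGraph.Walk.cons hadj q with hc
  have hnotin : ∀ x ∈ q.edges, x ∈ G'.edgeSet := hpedges
  have hEe : s(u, v) ∉ G'.edgeSet := by
    rw [hG', SimpleGraph.edgeSet_deleteEdges]
    simp
  have hEf : f ∉ G'.edgeSet := by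
    rw [hG', SimpleGraph.edgeSet_deleteEdges]
    simp
  have hct : c.IsTrail := by
    rw [hc, SimpleGraph.Walk.isTrail_cons]
    refine ⟨hqpath.isTrail, fun hmem => hEe (hnotin _ hmem)⟩
  refine ⟨c.edges.toFinset, ⟨?_, ?_⟩, ?_, ?_⟩
  · intro x hx
    rw [Finset.mem_coe, List.mem_toFinset] at hx
    exact c.edges_subset_edgeSet hx
  · intro x
    rw [aux_toFinset_filter_card c.edges hct.edges_nodup]
    have := hct.even_countP_edges_iff x
    simp only [ne_eq, not_true_eq_false, false_implies, iff_true] at this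
    convert this using 2
  · rw [List.mem_toFinset, hc, SimpleGraph.Walk.edges_cons]
    exact List.mem_cons_self
  · rw [List.mem_toFinset, hc, SimpleGraph.Walk.edges_cons]
    intro hmem
    rw [List.mem_cons] at hmem
    rcases hmem with h | h
    · exact hef h.symm
    · exact hEf (hnotin _ h)

/-- Let `e, f` be two distinct non-cut edges of a finite connected
simple graph. If `{e, f}` is a cut pair, then every binary circulation contains both
or neither of `e, f`; if not, then exactly half of the binary circulations contain
exactly one of `e` and `f`. -/
theorem cutPair_circulation_dichotomy [Fintype V] (G : SimpleGraph V) (hG : G.Connected)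
    (e f : Sym2 V) (hef : e ≠ f) (he : e ∈ G.edgeSet) (hf : f ∈ G.edgeSet)
    (hce : ¬IsCutEdge G e) (hcf : ¬IsCutEdge G f) :
    (IsCutPair G e f → ∀ φ : Finset (Sym2 V), IsCirculation G φ → (e ∈ φ ↔ f ∈ φ)) ∧
    (¬IsCutPair G e f →
      2 * Set.ncard {φ : Finset (Sym2 V) | IsCirculation G φ ∧ Xor' (e ∈ φ) (f ∈ φ)}
        = Set.ncard {φ : Finset (Sym2 V) | IsCirculation G φ}) := by
  classical
  constructor
  · -- Part 1: cut pair case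
    intro hcp φ hφ
    set G' := G.deleteEdges {e, f} with hG'
    have hdisc : ¬G'.Connected := hcp.2.2.2.2.2
    have hnV : Nonempty V := hG.nonempty
    obtain ⟨a, b, hnr⟩ : ∃ a b : V, ¬G'.Reachable a b := by
      by_contra h
      push_neg at h
      exact hdisc ((SimpleGraph.connected_iff G').mpr ⟨fun a b => h a b, hnV⟩)
    set S : Set V := {x | G'.Reachable a x} with hS
    have haS : a ∈ S := SimpleGraph.Reachable.refl a
    have hbS : b ∉ S := hnr
    have hG'side : ∀ u v : V, G'.Adj u v → (u ∈ S ↔ v ∈ S) := by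
      intro u v huv
      constructor
      · intro hu; exact hu.trans huv.reachable
      · intro hv; exact hv.trans huv.symm.reachable
    have hGside : ∀ u v : V, G.Adj u v → s(u, v) ≠ e → s(u, v) ≠ f → (u ∈ S ↔ v ∈ S) := by
      intro u v huv hne hnf
      refine hG'side u v ?_
      rw [hG', SimpleGraph.deleteEdges_adj]
      exact ⟨huv, by simp [hne, hnf]⟩
    -- both e and f must cross S
    have hcrossGen : ∀ g g' : Sym2 V, g ∈ G.edgeSet → ¬IsCutEdge G g' → g' ∈ G.edgeSet →
        ({e, f} : Set (Sym2 V)) = {g, g'} →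
        ∀ u v : V, g = s(u, v) → (u ∈ S ↔ v ∉ S) := by
      intro g g' hg hcg' hg' hpair u v hguv
      by_contra hnc
      have hsame : u ∈ S ↔ v ∈ S := by tauto
      have hside : ∀ x y : V, (G.deleteEdges {g'}).Adj x y → (x ∈ S ↔ y ∈ S) := by
        intro x y hxy
        rw [SimpleGraph.deleteEdges_adj] at hxy
        obtain ⟨hxy, hxg'⟩ := hxy
        simp only [Set.mem_singleton_iff] at hxg'
        by_cases hxg : s(x, y) = g
        · rw [hguv, Sym2.eq_iff] at hxg
          rcases hxg with ⟨rfl, rfl⟩ | ⟨rfl, rfl⟩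
          · exact hsame
          · exact hsame.symm
        · refine hGside x y hxy ?_ ?_
          · intro hh
            have : s(x, y) ∈ ({e, f} : Set (Sym2 V)) := by simp [hh]
            rw [hpair] at this
            simp only [Set.mem_insert_iff, Set.mem_singleton_iff] at this
            tauto
          · intro hh
            have : s(x, y) ∈ ({e, f} : Set (Sym2 V)) := by simp [hh]
            rw [hpair] at this
            simp only [Set.mem_insert_iff, Set.mem_singleton_iff] at this
            tauto
      have hconn' : (G.deleteEdges {g'}).Connected := by
        by_contra hnc2
        exact hcg' ⟨hg', hnc2⟩
      exact hbS ((aux_reach_side hside (hconn'.preconnected a b)).mp haS)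
    have hcrossE : ∀ u v : V, e = s(u, v) → (u ∈ S ↔ v ∉ S) :=
      hcrossGen e f he hcf hf rfl
    have hcrossF : ∀ u v : V, f = s(u, v) → (u ∈ S ↔ v ∉ S) :=
      hcrossGen f e hf hce he (by ext x; simp; tauto)
    have hevenCut := aux_circ_cut_even hφ S
    have honly : ∀ x : Sym2 V, x ∈ φ → (∀ u v : V, x = s(u, v) → (u ∈ S ↔ v ∉ S)) →
        x = e ∨ x = f := by
      intro x hxφ hPx
      induction x with
      | _ p q =>
        by_contra hcon
        push_neg at hcon
        have hadj : G.Adj p q := hφ.1 hxφ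
        have hsame := hGside p q hadj hcon.1 hcon.2
        have hcross := aux_cross_iff.mp hPx
        tauto
    have hfe : crossFilter S φ = φ ∩ {e, f} := by
      ext x
      simp only [crossFilter, Finset.mem_filter, Finset.mem_inter, Finset.mem_insert,
        Finset.mem_singleton]
      constructor
      · rintro ⟨hxφ, hPx⟩
        exact ⟨hxφ, honly x hxφ hPx⟩
      · rintro ⟨hxφ, rfl | rfl⟩
        · exact ⟨hxφ, hcrossE⟩
        · exact ⟨hxφ, hcrossF⟩
    rw [hfe] at hevenCut
    by_cases heφ : e ∈ φ <;> by_cases hfφ : f ∈ φ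
    · simp [heφ, hfφ]
    · exfalso
      have : φ ∩ {e, f} = {e} := by
        ext x
        simp only [Finset.mem_inter, Finset.mem_insert, Finset.mem_singleton]
        constructor
        · rintro ⟨hxφ, rfl | rfl⟩
          · rfl
          · exact absurd hxφ hfφ
        · rintro rfl
          exact ⟨heφ, Or.inl rfl⟩
      rw [this, Finset.card_singleton] at hevenCut
      exact (Nat.not_even_iff_odd.mpr odd_one) hevenCut
    · exfalso
      have : φ ∩ {e, f} = {f} := by
        ext x
        simp only [Finset.mem_inter, Finset.mem_insert, Finset.mem_singleton]
        constructor
        · rintro ⟨hxφ, rfl | rfl⟩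
          · exact absurd hxφ heφ
          · rfl
        · rintro rfl
          exact ⟨hfφ, Or.inr rfl⟩
      rw [this, Finset.card_singleton] at hevenCut
      exact (Nat.not_even_iff_odd.mpr odd_one) hevenCut
    · simp [heφ, hfφ]
  · -- Part 2: not a cut pair
    intro hncp
    have hconn' : (G.deleteEdges {e, f}).Connected := by
      by_contra h
      exact hncp ⟨hef, he, hf, hce, hcf, h⟩
    obtain ⟨ψ0, hψ0, he0, hf0⟩ := aux_exists_circ hef he hconn'
    set A := {φ : Finset (Sym2 V) | IsCirculation G φ ∧ Xor' (e ∈ φ) (f ∈ φ)} with hA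
    set B := {φ : Finset (Sym2 V) | IsCirculation G φ ∧ ¬Xor' (e ∈ φ) (f ∈ φ)} with hB
    have hsplit : {φ : Finset (Sym2 V) | IsCirculation G φ} = A ∪ B := by
      ext χ
      simp only [hA, hB, Set.mem_setOf_eq, Set.mem_union]
      tauto
    have hdisj : Disjoint A B := by
      rw [Set.disjoint_left]
      rintro χ ⟨-, h1⟩ ⟨-, h2⟩
      exact h2 h1
    have hinv : Function.Involutive (fun χ : Finset (Sym2 V) => χ ∆ ψ0) :=
      fun χ => symmDiff_symmDiff_cancel_right ψ0 χ
    have hxor : ∀ χ : Finset (Sym2 V),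
        Xor' (e ∈ χ ∆ ψ0) (f ∈ χ ∆ ψ0) ↔ ¬Xor' (e ∈ χ) (f ∈ χ) := by
      intro χ
      have hee : e ∈ χ ∆ ψ0 ↔ ¬(e ∈ χ) := by
        simp only [Finset.mem_symmDiff]
        tauto
      have hff : f ∈ χ ∆ ψ0 ↔ f ∈ χ := by
        simp only [Finset.mem_symmDiff]
        tauto
      rw [hee, hff]
      unfold Xor' Xor
      tauto
    have himg : B = (fun χ : Finset (Sym2 V) => χ ∆ ψ0) '' A := by
      ext χ
      simp only [hA, hB, Set.mem_setOf_eq, Set.mem_image]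
      constructor
      · rintro ⟨hχc, hx⟩
        refine ⟨χ ∆ ψ0, ⟨aux_isCirculation_symmDiff hχc hψ0, ?_⟩, hinv χ⟩
        rw [hxor χ]
        exact hx
      · rintro ⟨χ', ⟨hχc, hχx⟩, rfl⟩
        refine ⟨aux_isCirculation_symmDiff hχc hψ0, ?_⟩
        rw [hxor χ']
        exact fun h => h hχx
    have hcard : B.ncard = A.ncard := by
      rw [himg]
      exact Set.ncard_image_of_injective _ hinv.injective
    rw [hsplit, Set.ncard_union_eq hdisj (Set.toFinite _) (Set.toFinite _), hcard, two_mul]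
end
end

section
/- Let G = (V, E) be a finite connected undirected simple graph and let e, f, g be three distinct edges. If {e, f} is a cut pair and {f, g} is a cut pair, then {e, g} is a cut pair (the cut-pair relation is transitive). -/
open scoped Classical symmDiff

noncomputable section

variable {V : Type*}

/-! ### Auxiliary machinery -/

private lemma sym2_rep (e : Sym2 V) : ∃ a b : V, e = s(a, b) := by
  induction e using Sym2.ind with
  | _ a b => exact ⟨a, b, rfl⟩

/-- `h` crosses the vertex set `S` (has exactly one endpoint in `S`). -/
def Cross (S : Set V) (h : Sym2 V) : Prop :=
  ∀ a b : V, h = s(a, b) → (a ∈ S ↔ b ∉ S)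

lemma cross_mk {S : Set V} {u v : V} :
    Cross S s(u, v) ↔ (u ∈ S ↔ v ∉ S) := by
  constructor
  · exact fun h => h u v rfl
  · intro h a b hab
    rw [Sym2.eq_iff] at hab
    rcases hab with ⟨rfl, rfl⟩ | ⟨rfl, rfl⟩
    · exact h
    · tauto

lemma reach_mem {G' : SimpleGraph V} {S : Set V}
    (hcl : ∀ u v : V, G'.Adj u v → u ∈ S → v ∈ S) :
    ∀ {x y : V}, G'.Reachable x y → x ∈ S → y ∈ S := by
  intro x y hr
  obtain ⟨w⟩ := hr
  induction w with
  | nil => exact id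
  | cons ha _ ih => exact fun hx => ih (hcl _ _ ha hx)

/-- A cut pair induces a vertex set whose edge cut is exactly `{e, f}`. -/
lemma exists_cut_set [Fintype V] {G : SimpleGraph V} (hG : G.Connected)
    {e f : Sym2 V} (hcp : IsCutPair G e f) :
    ∃ S : Set V,
      (∀ h ∈ G.edgeSet, Cross S h → h = e ∨ h = f) ∧ Cross S e ∧ Cross S f := by
  obtain ⟨hne, he, hf, hce, hcf, hd⟩ := hcp
  have hnp : ¬ (G.deleteEdges {e, f}).Preconnected := fun hp =>
    hd ((G.deleteEdges {e, f}).connected_iff.mpr ⟨hp, hG.nonempty⟩)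
  rw [SimpleGraph.Preconnected] at hnp
  push_neg at hnp
  obtain ⟨x, y, hxy⟩ := hnp
  set H := G.deleteEdges {e, f} with hH
  set S : Set V := {v | H.Reachable x v} with hS
  have hxS : x ∈ S := SimpleGraph.Reachable.refl x
  have hyS : y ∉ S := hxy
  have hcl : ∀ u v : V, H.Adj u v → u ∈ S → v ∈ S := fun u v huv hu =>
    hu.trans huv.reachable
  have hsub : ∀ h ∈ G.edgeSet, Cross S h → h = e ∨ h = f := by
    intro h hh hcr
    by_contra hcon
    push_neg at hcon
    obtain ⟨a, b, rfl⟩ := sym2_rep h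
    have hadj : H.Adj a b := by
      rw [hH, SimpleGraph.deleteEdges_adj]
      refine ⟨hh, ?_⟩
      simp only [Set.mem_insert_iff, Set.mem_singleton_iff]
      push_neg
      exact hcon
    have h1 := hcl a b hadj
    have h2 := hcl b a hadj.symm
    have h3 := cross_mk.mp hcr
    tauto
  obtain ⟨a, b, hab⟩ := sym2_rep e
  obtain ⟨c, d, hcd⟩ := sym2_rep f
  have hcrossE : Cross S e := by
    rw [hab, cross_mk]
    by_contra hc
    apply hcf
    refine ⟨hf, fun hconn => hyS ?_⟩
    refine reach_mem ?_ (hconn.preconnected x y) hxS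
    intro u v huv hu
    rw [SimpleGraph.deleteEdges_adj] at huv
    by_cases he' : s(u, v) = e
    · rw [hab, Sym2.eq_iff] at he'
      rcases he' with ⟨rfl, rfl⟩ | ⟨rfl, rfl⟩ <;> tauto
    · have hadj : H.Adj u v := by
        rw [hH, SimpleGraph.deleteEdges_adj]
        refine ⟨huv.1, ?_⟩
        simp only [Set.mem_insert_iff, Set.mem_singleton_iff]
        push_neg
        refine ⟨he', ?_⟩
        simpa using huv.2
      exact hcl u v hadj hu
  have hcrossF : Cross S f := by
    rw [hcd, cross_mk]
    by_contra hc
    apply hce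
    refine ⟨he, fun hconn => hyS ?_⟩
    refine reach_mem ?_ (hconn.preconnected x y) hxS
    intro u v huv hu
    rw [SimpleGraph.deleteEdges_adj] at huv
    by_cases hf' : s(u, v) = f
    · rw [hcd, Sym2.eq_iff] at hf'
      rcases hf' with ⟨rfl, rfl⟩ | ⟨rfl, rfl⟩ <;> tauto
    · have hadj : H.Adj u v := by
        rw [hH, SimpleGraph.deleteEdges_adj]
        refine ⟨huv.1, ?_⟩
        simp only [Set.mem_insert_iff, Set.mem_singleton_iff]
        push_neg
        refine ⟨?_, hf'⟩
        simpa using huv.2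
      exact hcl u v hadj hu
  exact ⟨S, hsub, hcrossE, hcrossF⟩

private lemma prop1 {p q r s : Prop} (h1 : p ↔ ¬q) (h2 : ¬(r ↔ ¬s)) :
    ¬(p ↔ r) ↔ ¬¬(q ↔ s) := by tauto

private lemma prop2 {p q r s : Prop} (h : (¬(p ↔ r)) ↔ (q ↔ s)) :
    ¬((p ↔ ¬q) ↔ (r ↔ ¬s)) := by tauto

private lemma prop3 {p q r s : Prop} (h : ¬((p ↔ ¬q) ↔ (r ↔ ¬s))) (hs : ¬(p ↔ ¬q)) :
    r ↔ ¬s := by tauto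

private lemma prop4 {p q : Prop} (h : ¬(p ↔ ¬q)) (hp : p) : q := by tauto

/-- Transitivity of cut pairs: if `{e, f}` and `{f, g}` are cut pairs
of a finite connected simple graph, then so is `{e, g}`. -/
theorem cutPair_trans [Fintype V] (G : SimpleGraph V) (hG : G.Connected)
    (e f g : Sym2 V) (heg : e ≠ g)
    (hef : IsCutPair G e f) (hfg : IsCutPair G f g) :
    IsCutPair G e g := by
  obtain ⟨S, hS1, hSe, hSf⟩ := exists_cut_set hG hef
  obtain ⟨T, hT1, hTf, hTg⟩ := exists_cut_set hG hfg
  obtain ⟨hef', he, hf, hce, hcf, -⟩ := hef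
  obtain ⟨hfg', -, hg, -, hcg, -⟩ := hfg
  set U : Set V := {v | ¬ (v ∈ S ↔ v ∈ T)} with hU
  have hTe : ¬ Cross T e := by
    intro hc
    rcases hT1 e he hc with rfl | rfl
    · exact hef' rfl
    · exact heg rfl
  have hSg : ¬ Cross S g := by
    intro hc
    rcases hS1 g hg hc with rfl | rfl
    · exact heg rfl
    · exact hfg' rfl
  have hUe : Cross U e := by
    intro a b hab
    have h1 := hSe a b hab
    have h2 : ¬ (a ∈ T ↔ b ∉ T) := fun h => hTe (by rw [hab]; exact cross_mk.mpr h)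
    simp only [hU, Set.mem_setOf_eq]
    exact prop1 h1 h2
  have hUsub : ∀ h ∈ G.edgeSet, Cross U h → h = e ∨ h = g := by
    intro h hh hcr
    obtain ⟨a, b, rfl⟩ := sym2_rep h
    have hcrU := cross_mk.mp hcr
    simp only [hU, Set.mem_setOf_eq, not_not] at hcrU
    have hS' : (a ∈ S ↔ b ∉ S) → s(a, b) = e ∨ s(a, b) = f :=
      fun hx => hS1 _ hh (cross_mk.mpr hx)
    have hT' : (a ∈ T ↔ b ∉ T) → s(a, b) = f ∨ s(a, b) = g :=
      fun hx => hT1 _ hh (cross_mk.mpr hx)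
    have hfS : s(a, b) = f → (a ∈ S ↔ b ∉ S) := fun hx => cross_mk.mp (hx ▸ hSf)
    have hfT : s(a, b) = f → (a ∈ T ↔ b ∉ T) := fun hx => cross_mk.mp (hx ▸ hTf)
    have hxor : ¬ ((a ∈ S ↔ b ∉ S) ↔ (a ∈ T ↔ b ∉ T)) := prop2 hcrU
    by_cases hs : a ∈ S ↔ b ∉ S
    · rcases hS' hs with he' | hf'
      · exact Or.inl he'
      · exact absurd (hfT hf') (fun ht => hxor ⟨fun _ => ht, fun _ => hs⟩)
    · have ht : a ∈ T ↔ b ∉ T := prop3 hxor hs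
      rcases hT' ht with hf' | hg'
      · exact absurd (hfS hf') hs
      · exact Or.inr hg'
  refine ⟨heg, he, hg, hce, hcg, ?_⟩
  intro hconn
  have hcl : ∀ u v : V, (G.deleteEdges {e, g}).Adj u v → u ∈ U → v ∈ U := by
    intro u v huv hu
    rw [SimpleGraph.deleteEdges_adj] at huv
    have hnc : ¬ Cross U s(u, v) := by
      intro hc
      rcases hUsub _ ((SimpleGraph.mem_edgeSet G).mpr huv.1) hc with rfl | rfl
      · exact huv.2 (Set.mem_insert _ _)
      · exact huv.2 (Set.mem_insert_of_mem _ rfl)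
    rw [cross_mk] at hnc
    exact prop4 hnc hu
  obtain ⟨a, b, hab⟩ := sym2_rep e
  have key := hUe a b hab
  by_cases haU : a ∈ U
  · exact (key.mp haU) (reach_mem hcl (hconn.preconnected a b) haU)
  · have hbU : b ∈ U := by
      by_contra hb
      exact haU (key.mpr hb)
    exact haU (reach_mem hcl (hconn.preconnected b a) hbU)

end
end

section
/- Let G = (V, E) be a finite connected undirected simple graph and v ∈ V. Then v is a cut vertex of G if and only if the edge set δ(v) properly contains a nonempty induced edge cut of G, i.e., there exists S ⊆ V with ∅ ≠ δ(S) ⊊ δ(v). -/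
open scoped Classical symmDiff

noncomputable section

variable {V : Type*}

lemma mem_edgeCut_iff [Fintype V] (G : SimpleGraph V) (S : Set V) (a b : V) :
    s(a, b) ∈ edgeCut G S ↔ G.Adj a b ∧ (a ∈ S ↔ b ∉ S) := by
  classical
  simp only [edgeCut, Finset.mem_filter, SimpleGraph.mem_edgeFinset,
    SimpleGraph.mem_edgeSet]
  constructor
  · rintro ⟨h, h2⟩
    exact ⟨h, h2 a b rfl⟩
  · rintro ⟨h, h2⟩
    refine ⟨h, fun u w huw => ?_⟩
    rw [Sym2.eq_iff] at huw
    rcases huw with ⟨rfl, rfl⟩ | ⟨rfl, rfl⟩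
    · exact h2
    · tauto

lemma edgeCut_compl [Fintype V] (G : SimpleGraph V) (S : Set V) :
    edgeCut G Sᶜ = edgeCut G S := by
  ext e
  induction e using Sym2.ind with
  | _ x y =>
    simp only [mem_edgeCut_iff, Set.mem_compl_iff]
    constructor <;> rintro ⟨h1, h2⟩ <;> exact ⟨h1, by tauto⟩

/-- In a finite connected simple graph with at least two vertices,
`v` is a cut vertex iff `δ(v)` properly contains a nonempty induced edge cut, i.e.
there is `S ⊆ V` with `∅ ≠ δ(S) ⊊ δ(v)`. -/
theorem cutVertex_iff_proper_inducedEdgeCut [Fintype V] (G : SimpleGraph V)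
    (hG : G.Connected) (hV : 2 ≤ Fintype.card V) (v : V) :
    IsCutVertex G v ↔
      ∃ S : Set V, (edgeCut G S).Nonempty ∧ edgeCut G S ⊂ edgeCut G {v} := by
  constructor
  · intro hcut
    rw [IsCutVertex] at hcut
    have hne : Nonempty {u : V | u ≠ v} := by
      obtain ⟨w, hw⟩ := Fintype.exists_ne_of_one_lt_card (by omega) v
      exact ⟨⟨w, hw⟩⟩
    rw [SimpleGraph.connected_iff] at hcut
    push_neg at hcut
    have hpre : ¬ (G.induce {u | u ≠ v}).Preconnected := fun h => @not_isEmpty_of_nonempty _ hne (hcut h)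
    rw [SimpleGraph.Preconnected] at hpre
    push_neg at hpre
    obtain ⟨a, b, hab⟩ := hpre
    set S : Set V := {x : V | ∃ h : x ≠ v, (G.induce {u | u ≠ v}).Reachable a ⟨x, h⟩}
      with hSdef
    have haS : (a : V) ∈ S := ⟨a.2, by rw [Subtype.coe_eta]⟩
    have hbS : (b : V) ∉ S := by
      rintro ⟨h, hr⟩
      rw [Subtype.coe_eta] at hr
      exact hab hr
    have hvS : v ∉ S := by rintro ⟨h, -⟩; exact h rfl
    have hstep : ∀ x y : V, x ∈ S → y ≠ v → G.Adj x y → y ∈ S := by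
      rintro x y ⟨hx, hr⟩ hy hadj
      refine ⟨hy, hr.trans (SimpleGraph.Adj.reachable ?_)⟩
      simp only [SimpleGraph.comap_adj]
      exact hadj
    have hsub : edgeCut G S ⊆ edgeCut G {v} := by
      intro e
      induction e using Sym2.ind with
      | _ x y =>
        intro he
        rw [mem_edgeCut_iff] at he ⊢
        obtain ⟨hadj, hiff⟩ := he
        refine ⟨hadj, ?_⟩
        simp only [Set.mem_singleton_iff]
        by_cases hx : x ∈ S
        · have hy : y ∉ S := hiff.1 hx
          have hyv : y = v := by
            by_contra hyv
            exact hy (hstep x y hx hyv hadj)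
          have hxv : x ≠ v := fun h => hvS (h ▸ hx)
          tauto
        · have hy : y ∈ S := by tauto
          have hxv : x = v := by
            by_contra hxv
            exact hx (hstep y x hy hxv hadj.symm)
          have hyv : y ≠ v := fun h => hvS (h ▸ hy)
          tauto
    refine ⟨S, ?_, ?_⟩
    · obtain ⟨p⟩ := hG.preconnected (a : V) (b : V)
      obtain ⟨d, -, hd1, hd2⟩ := p.exists_boundary_dart S haS hbS
      exact ⟨s(d.fst, d.snd), (mem_edgeCut_iff G S _ _).2 ⟨d.adj, by tauto⟩⟩
    · rw [Finset.ssubset_iff_of_subset hsub]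
      obtain ⟨p⟩ := hG.preconnected v (b : V)
      obtain ⟨d, -, hd1, hd2⟩ := p.exists_boundary_dart (S ∪ {v})
        (Set.mem_union_right _ rfl) (by rintro (h | h); exact hbS h; exact b.2 h)
      simp only [Set.mem_union, Set.mem_singleton_iff] at hd1 hd2
      push_neg at hd2
      have hfst : d.fst = v := by
        rcases hd1 with h | h
        · exfalso
          exact hd2.1 (hstep d.fst d.snd h hd2.2 d.adj)
        · exact h
      refine ⟨s(d.fst, d.snd), (mem_edgeCut_iff G _ _ _).2 ⟨d.adj, ?_⟩, ?_⟩
      · simp only [Set.mem_singleton_iff]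
        have := d.adj.ne
        tauto
      · rw [mem_edgeCut_iff]
        rintro ⟨-, hiff⟩
        have : d.fst ∉ S := hfst ▸ hvS
        tauto
  · rintro ⟨S, hne, hss⟩
    have hsub := hss.subset
    obtain ⟨S, hvS, hne, hss, hsub⟩ :
        ∃ S : Set V, v ∈ S ∧ (edgeCut G S).Nonempty ∧ edgeCut G S ⊂ edgeCut G {v} ∧
          edgeCut G S ⊆ edgeCut G {v} := by
      by_cases hvS : v ∈ S
      · exact ⟨S, hvS, hne, hss, hsub⟩
      · exact ⟨Sᶜ, hvS, by rwa [edgeCut_compl], by rwa [edgeCut_compl],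
          by rwa [edgeCut_compl]⟩
    -- get u with G.Adj v u, u ∉ S
    obtain ⟨u, hadj_vu, huS⟩ : ∃ u, G.Adj v u ∧ u ∉ S := by
      obtain ⟨e, he⟩ := hne
      have hev := hsub he
      revert he hev
      induction e using Sym2.ind with
      | _ x y =>
        intro he hev
        rw [mem_edgeCut_iff] at he hev
        obtain ⟨hadj, hxy⟩ := he
        obtain ⟨-, hv⟩ := hev
        simp only [Set.mem_singleton_iff] at hv
        by_cases hx : x = v
        · subst hx
          exact ⟨y, hadj, by tauto⟩
        · have hy : y = v := by tauto
          subst hy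
          exact ⟨x, hadj.symm, by tauto⟩
    -- get w with G.Adj v w, w ∈ S
    obtain ⟨w, hadj_vw, hwS⟩ : ∃ w, G.Adj v w ∧ w ∈ S := by
      obtain ⟨f, hf1, hf2⟩ := Finset.exists_of_ssubset hss
      revert hf1 hf2
      induction f using Sym2.ind with
      | _ x y =>
        intro hf1 hf2
        rw [mem_edgeCut_iff] at hf1 hf2
        obtain ⟨hadj, hv⟩ := hf1
        simp only [Set.mem_singleton_iff] at hv
        by_cases hx : x = v
        · subst hx
          refine ⟨y, hadj, ?_⟩
          by_contra hyS
          exact hf2 ⟨hadj, by tauto⟩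
        · have hy : y = v := by tauto
          subst hy
          refine ⟨x, hadj.symm, ?_⟩
          by_contra hxS
          exact hf2 ⟨hadj, by tauto⟩
    intro hconn
    have hu : u ≠ v := hadj_vu.ne'
    have hw : w ≠ v := hadj_vw.ne'
    obtain ⟨p⟩ := hconn.preconnected ⟨u, hu⟩ ⟨w, hw⟩
    obtain ⟨d, -, hd1, hd2⟩ := p.exists_boundary_dart {x : {u : V | u ≠ v} | (x : V) ∉ S}
      huS (by simpa using hwS)
    simp only [Set.mem_setOf_eq, not_not] at hd1 hd2
    have hadj : G.Adj (d.snd : V) (d.fst : V) := by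
      have := d.adj
      simp only [SimpleGraph.comap_adj] at this
      exact this.symm
    have hmem : s((d.snd : V), (d.fst : V)) ∈ edgeCut G S :=
      (mem_edgeCut_iff G S _ _).2 ⟨hadj, by tauto⟩
    have := hsub hmem
    rw [mem_edgeCut_iff] at this
    have h2 := this.2
    simp only [Set.mem_singleton_iff] at h2
    have := d.snd.2
    have := d.fst.2
    simp only [Set.mem_setOf_eq] at *
    tauto
end
end

section
/- Let G = (V, E) be a finite connected undirected simple graph, let v be a cut vertex of G with degree d(v), and let φ_1, …, φ_b be any binary circulations of G. Form the b × d(v) matrix M^{[v]} over Z/2 whose rows are indexed by 1, …, b, whose columns are indexed by the edges of δ(v), and whose (i, e) entry is 1 if e ∈ φ_i and 0 otherwise. Then rank(M^{[v]}) ≤ d(v) − 2. -/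
open scoped Classical symmDiff

noncomputable section

variable {V : Type*}

/-- Weight of an edge w.r.t. a vertex set `A`: number of endpoints in `A`, mod 2. -/
def cw (A : Set V) : Sym2 V → ZMod 2 :=
  Sym2.lift ⟨fun a b => (if a ∈ A then 1 else 0) + (if b ∈ A then 1 else 0),
    fun _ _ => add_comm _ _⟩

lemma cw_mk (A : Set V) (a b : V) :
    cw A s(a, b) = (if a ∈ A then (1 : ZMod 2) else 0) + (if b ∈ A then 1 else 0) := rfl

/-- A binary circulation crosses any vertex set an even number of times. -/
lemma cw_sum [Fintype V] {G : SimpleGraph V} {φ : Finset (Sym2 V)}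
    (hφ : IsCirculation G φ) (A : Set V) : ∑ e ∈ φ, cw A e = 0 := by
  have key : ∀ e ∈ φ, cw A e = ∑ u : V, (if u ∈ A ∧ u ∈ e then (1 : ZMod 2) else 0) := by
    intro e he
    induction e using Sym2.ind with
    | _ a b =>
      have hab : a ≠ b := (G.ne_of_adj (hφ.1 he))
      calc cw A s(a, b)
          = ∑ u ∈ ({a, b} : Finset V), (if u ∈ A then (1 : ZMod 2) else 0) := by
            rw [Finset.sum_pair hab, cw_mk]
        _ = ∑ u ∈ Finset.univ.filter (· ∈ ({a, b} : Finset V)),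
              (if u ∈ A then (1 : ZMod 2) else 0) := by
            rw [Finset.filter_univ_mem]
        _ = ∑ u : V, (if u ∈ A ∧ u ∈ s(a, b) then (1 : ZMod 2) else 0) := by
            rw [Finset.sum_filter]
            refine Finset.sum_congr rfl fun u _ => ?_
            by_cases h1 : u ∈ A <;> by_cases h2 : u = a ∨ u = b <;>
              simp [h1, h2, Sym2.mem_iff, Finset.mem_insert, Finset.mem_singleton]
  rw [Finset.sum_congr rfl key, Finset.sum_comm]
  refine Finset.sum_eq_zero fun u _ => ?_
  by_cases hu : u ∈ A
  · have h1 : ∑ e ∈ φ, (if u ∈ A ∧ u ∈ e then (1 : ZMod 2) else 0)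
        = ((φ.filter fun e => u ∈ e).card : ZMod 2) := by
      rw [Finset.card_filter]
      push_cast
      exact Finset.sum_congr rfl fun e _ => by simp [hu]
    rw [h1]
    obtain ⟨k, hk⟩ := hφ.2 u
    rw [hk]
    push_cast
    exact CharTwo.add_self_eq_zero _
  · exact Finset.sum_eq_zero fun e _ => if_neg fun hc => hu hc.1

lemma mem_edgeCut_of_adj [Fintype V] {G : SimpleGraph V} {v y : V} (h : G.Adj v y) :
    s(v, y) ∈ edgeCut G {v} := by
  have hne : v ≠ y := h.ne
  rw [edgeCut, Finset.mem_filter]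
  refine ⟨SimpleGraph.mem_edgeFinset.mpr h, fun u w huw => ?_⟩
  rw [Sym2.eq_iff] at huw
  rcases huw with ⟨rfl, rfl⟩ | ⟨rfl, rfl⟩ <;> simp [hne, hne.symm]

lemma mem_edgeCut_of_mem [Fintype V] {G : SimpleGraph V} {v : V} {e : Sym2 V}
    (hE : e ∈ G.edgeSet) (hv : v ∈ e) : e ∈ edgeCut G {v} := by
  obtain ⟨y, rfl⟩ := Sym2.mem_iff_exists.mp hv
  exact mem_edgeCut_of_adj ((SimpleGraph.mem_edgeSet _).mp hE)

set_option maxHeartbeats 2000000 in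
/-- If `v` is a cut vertex of a finite connected simple graph and
`φ_1, …, φ_b` are binary circulations, then the `b × d(v)` matrix over `ZMod 2` whose
`(i, e)` entry records whether `e ∈ φ_i` has rank at most `d(v) - 2`. -/
theorem rank_le_of_cutVertex [Fintype V] (G : SimpleGraph V)
    (hG : G.Connected) (hV : 2 ≤ Fintype.card V)
    (v : V) (hv : IsCutVertex G v)
    (b : ℕ) (φ : Fin b → Finset (Sym2 V)) (hφ : ∀ i, IsCirculation G (φ i)) :
    Matrix.rank (Matrix.of fun (i : Fin b) (e : ↥(edgeCut G {v})) =>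
        if (e : Sym2 V) ∈ φ i then (1 : ZMod 2) else 0)
      ≤ (edgeCut G {v}).card - 2 := by
  classical
  set D := edgeCut G {v} with hDdef
  set M : Matrix (Fin b) (↥D) (ZMod 2) :=
    Matrix.of fun (i : Fin b) (e : ↥D) =>
      if (e : Sym2 V) ∈ φ i then (1 : ZMod 2) else 0 with hM
  -- find two vertices in different components of `G - v`
  obtain ⟨u0, hu0⟩ : ∃ u : V, u ≠ v := by
    by_contra h
    push_neg at h
    have : Fintype.card V ≤ 1 :=
      Fintype.card_le_one_iff.mpr fun a c => (h a).trans (h c).symm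
    omega
  have hne : Nonempty ↥{u : V | u ≠ v} := ⟨⟨u0, hu0⟩⟩
  rw [IsCutVertex, SimpleGraph.connected_iff] at hv
  push_neg at hv
  have hpre : ¬ (G.induce {u | u ≠ v}).Preconnected := fun h => hne.elim (hv h).false
  rw [SimpleGraph.Preconnected] at hpre
  push_neg at hpre
  obtain ⟨x, y, hxy⟩ := hpre
  -- the component of x in G - v
  set C : Set V := {u : V | ∃ h : u ≠ v, (G.induce {u | u ≠ v}).Reachable x ⟨u, h⟩} with hC
  have hvC : v ∉ C := fun h => h.1 rfl
  have hxC : (x : V) ∈ C := ⟨x.2, SimpleGraph.Reachable.refl _⟩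
  have hyC : (y : V) ∉ C := fun h => hxy h.2
  have hclosed : ∀ a c : V, G.Adj a c → a ∈ C → c ≠ v → c ∈ C := by
    intro a c hac haC hcv
    obtain ⟨hav, hr⟩ := haC
    exact ⟨hcv, hr.trans (SimpleGraph.Adj.reachable (by simpa using hac))⟩
  set A : Set V := {u : V | u ≠ v ∧ u ∉ C} with hA
  have hvA : v ∉ A := fun h => h.1 rfl
  have hyA : (y : V) ∈ A := ⟨y.2, hyC⟩
  -- cw vanishes on edges not incident to v
  have hsame : ∀ a c : V, G.Adj a c → a ≠ v → c ≠ v → (a ∈ C ↔ c ∈ C) := fun a c hac hav hcv =>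
    ⟨fun h => hclosed a c hac h hcv, fun h => hclosed c a hac.symm h hav⟩
  have hinterior : ∀ (B : Set V), (∀ a c : V, G.Adj a c → (a ∈ B ↔ c ∈ B)
        ∨ v ∈ ({a, c} : Set V)) → ∀ e ∈ G.edgeSet, e ∉ D → cw B e = 0 := by
    intro B hB e hE heD
    induction e using Sym2.ind with
    | _ a c =>
      have hac : G.Adj a c := (SimpleGraph.mem_edgeSet _).mp hE
      have hvE : v ∉ s(a, c) := fun hmem => heD (mem_edgeCut_of_mem hE hmem)
      rcases hB a c hac with hiff | hvmem
      · rw [cw_mk]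
        by_cases h : a ∈ B
        · rw [if_pos h, if_pos (hiff.mp h)]
          exact CharTwo.add_self_eq_zero 1
        · rw [if_neg h, if_neg (fun hc => h (hiff.mpr hc)), add_zero]
      · exact absurd (by simpa [Sym2.mem_iff] using hvmem) hvE
  have hC0 : ∀ e ∈ G.edgeSet, e ∉ D → cw C e = 0 := by
    refine hinterior C fun a c hac => ?_
    by_cases hav : a = v
    · exact Or.inr (by simp [hav])
    by_cases hcv : c = v
    · exact Or.inr (by simp [hcv])
    exact Or.inl (hsame a c hac hav hcv)
  have hA0 : ∀ e ∈ G.edgeSet, e ∉ D → cw A e = 0 := by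
    refine hinterior A fun a c hac => ?_
    by_cases hav : a = v
    · exact Or.inr (by simp [hav])
    by_cases hcv : c = v
    · exact Or.inr (by simp [hcv])
    refine Or.inl ?_
    have := hsame a c hac hav hcv
    simp only [hA, Set.mem_setOf_eq]
    tauto
  -- find edges of D hitting C and A
  have hxCedge : ∃ p : V, p ∈ C ∧ G.Adj v p := by
    obtain ⟨w⟩ := hG.preconnected (x : V) v
    obtain ⟨d, _, hd1, hd2⟩ := w.exists_boundary_dart C hxC hvC
    by_cases h2 : d.toProd.2 = v
    · exact ⟨d.toProd.1, hd1, h2 ▸ d.adj.symm⟩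
    · exact absurd (hclosed _ _ d.adj hd1 h2) hd2
  have hyAedge : ∃ q : V, q ∈ A ∧ G.Adj v q := by
    obtain ⟨w⟩ := hG.preconnected (y : V) v
    obtain ⟨d, _, hd1, hd2⟩ := w.exists_boundary_dart A hyA hvA
    by_cases h2 : d.toProd.2 = v
    · exact ⟨d.toProd.1, hd1, h2 ▸ d.adj.symm⟩
    · have h2C : d.toProd.2 ∈ C := by
        by_contra hc
        exact hd2 ⟨h2, hc⟩
      exact absurd (hclosed _ _ d.adj.symm h2C hd1.1) hd1.2
  obtain ⟨p, hpC, hpadj⟩ := hxCedge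
  obtain ⟨q, hqA, hqadj⟩ := hyAedge
  have hpv : p ≠ v := fun h => hvC (h ▸ hpC)
  -- the two linear functionals
  have mkL : ∀ B : Set V, ∃ f : (↥D → ZMod 2) →ₗ[ZMod 2] ZMod 2,
      ∀ z, f z = ∑ e : ↥D, cw B (e : Sym2 V) * z e := by
    intro B
    refine ⟨{ toFun := fun z => ∑ e : ↥D, cw B (e : Sym2 V) * z e
              map_add' := fun z w => by simp [mul_add, Finset.sum_add_distrib]
              map_smul' := fun c z => by
                simp [Finset.mul_sum, smul_eq_mul, mul_comm, mul_left_comm] }, fun z => rfl⟩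
  obtain ⟨fC, hfC⟩ := mkL C
  obtain ⟨fA, hfA⟩ := mkL A
  set h : (↥D → ZMod 2) →ₗ[ZMod 2] (ZMod 2 × ZMod 2) := fC.prod fA with hh
  -- rows lie in ker h
  have hrow : ∀ (B : Set V), (∀ e ∈ G.edgeSet, e ∉ D → cw B e = 0) → ∀ i : Fin b,
      ∑ e : ↥D, cw B (e : Sym2 V) * (if (e : Sym2 V) ∈ φ i then (1 : ZMod 2) else 0) = 0 := by
    intro B hB0 i
    calc ∑ e : ↥D, cw B (e : Sym2 V) * (if (e : Sym2 V) ∈ φ i then (1 : ZMod 2) else 0)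
        = ∑ e ∈ D, cw B e * (if e ∈ φ i then (1 : ZMod 2) else 0) :=
          Finset.sum_coe_sort D (fun e => cw B e * if e ∈ φ i then (1:ZMod 2) else 0)
      _ = ∑ e ∈ D.filter (· ∈ φ i), cw B e := by
          rw [Finset.sum_filter]
          exact Finset.sum_congr rfl fun e _ => by
            by_cases he : e ∈ φ i <;> simp [he]
      _ = ∑ e ∈ (φ i).filter (· ∈ D), cw B e := by
          congr 1
          ext e
          simp only [Finset.mem_filter]
          tauto
      _ = ∑ e ∈ φ i, cw B e := by
          rw [← Finset.sum_filter_add_sum_filter_not (φ i) (· ∈ D) (cw B)]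
          have hz : ∑ e ∈ (φ i).filter (fun e => ¬ e ∈ D), cw B e = 0 :=
            Finset.sum_eq_zero fun e he => by
              rw [Finset.mem_filter] at he
              exact hB0 e ((hφ i).1 he.1) he.2
          rw [hz, add_zero]
      _ = 0 := cw_sum (hφ i) B
  have hspan : Submodule.span (ZMod 2) (Set.range M) ≤ LinearMap.ker h := by
    rw [Submodule.span_le]
    rintro z ⟨i, rfl⟩
    rw [SetLike.mem_coe, LinearMap.mem_ker, hh, LinearMap.prod_apply]
    have h1 : fC (M i) = 0 := by rw [hfC]; exact hrow C hC0 i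
    have h2 : fA (M i) = 0 := by rw [hfA]; exact hrow A hA0 i
    simp [h1, h2, Pi.prod]
  -- h is surjective
  let e0 : ↥D := ⟨s(v, p), mem_edgeCut_of_adj hpadj⟩
  let e1 : ↥D := ⟨s(v, q), mem_edgeCut_of_adj hqadj⟩
  have hsingle : ∀ (B : Set V) (e' : ↥D),
      (∑ e : ↥D, cw B (e : Sym2 V) * (Pi.single e' 1 : ↥D → ZMod 2) e) = cw B (e' : Sym2 V) := by
    intro B e'
    rw [Finset.sum_eq_single e']
    · simp
    · intro c _ hc
      simp [Pi.single_apply, hc]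
    · intro hc
      exact absurd (Finset.mem_univ e') hc
  have hcw0 : cw C (e0 : Sym2 V) = 1 ∧ cw A (e0 : Sym2 V) = 0 := by
    constructor
    · show cw C s(v, p) = 1
      rw [cw_mk, if_neg hvC, if_pos hpC, zero_add]
    · show cw A s(v, p) = 0
      rw [cw_mk, if_neg hvA, if_neg (fun hp : p ∈ A => hp.2 hpC), add_zero]
  have hcw1 : cw C (e1 : Sym2 V) = 0 ∧ cw A (e1 : Sym2 V) = 1 := by
    constructor
    · show cw C s(v, q) = 0
      rw [cw_mk, if_neg hvC, if_neg hqA.2, add_zero]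
    · show cw A s(v, q) = 1
      rw [cw_mk, if_neg hvA, if_pos hqA, zero_add]
  have hz0 : h (Pi.single e0 1 : ↥D → ZMod 2) = (1, 0) := by
    rw [hh, LinearMap.prod_apply]
    simp only [Function.prod, hfC, hfA, hsingle, hcw0.1, hcw0.2]
  have hz1 : h (Pi.single e1 1 : ↥D → ZMod 2) = (0, 1) := by
    rw [hh, LinearMap.prod_apply]
    simp only [Function.prod, hfC, hfA, hsingle, hcw1.1, hcw1.2]
  have hsurj : Function.Surjective h := by
    rintro ⟨a, c⟩
    refine ⟨a • (Pi.single e0 1 : ↥D → ZMod 2) + c • (Pi.single e1 1 : ↥D → ZMod 2), ?_⟩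
    rw [map_add, map_smul, map_smul, hz0, hz1]
    simp [Prod.ext_iff]
  -- dimension count
  have hrange : LinearMap.range h = ⊤ := LinearMap.range_eq_top.mpr hsurj
  have hdim := LinearMap.finrank_range_add_finrank_ker h
  rw [hrange, finrank_top] at hdim
  have h2 : Module.finrank (ZMod 2) (ZMod 2 × ZMod 2) = 2 := by
    rw [Module.finrank_prod, Module.finrank_self]
  have hn : Module.finrank (ZMod 2) (↥D → ZMod 2) = D.card := by
    rw [Module.finrank_fintype_fun_eq_card, Fintype.card_coe]
  have hkerdim : Module.finrank (ZMod 2) (LinearMap.ker h) = D.card - 2 := by omega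
  rw [← Matrix.rank_transpose, Matrix.rank, Matrix.range_mulVecLin]
  calc Module.finrank (ZMod 2) (Submodule.span (ZMod 2) (Set.range M))
      ≤ Module.finrank (ZMod 2) (LinearMap.ker h) := Submodule.finrank_mono hspan
    _ = D.card - 2 := hkerdim
end
end

section
/- Let G = (V, E) be a finite connected undirected simple graph with n = |V| ≥ 2 vertices and m = |E| edges, let Z denote its cycle space, and let b be a natural number with 2^b ≥ n·m². Then the number of b-tuples (φ_1, …, φ_b) of binary circulations for which either (i) some edge e that is not a cut edge satisfies e ∉ φ_i for all i, or (ii) some pair of distinct edges e, f, neither a cut edge, with {e, f} not a cut pair satisfies (e ∈ φ_i ⟺ f ∈ φ_i) for all i, is at most |Z|^b / n. -/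
open scoped Classical symmDiff

noncomputable section

variable {V : Type*}

section Helpers

lemma card_symmDiff_add_two_mul_inter {α : Type*} [DecidableEq α] (s t : Finset α) :
    (s ∆ t).card + 2 * (s ∩ t).card = s.card + t.card := by
  rw [symmDiff_def, Finset.sup_eq_union, Finset.card_union_of_disjoint disjoint_sdiff_sdiff]
  have h1 := Finset.card_sdiff_add_card_inter s t
  have h2 := Finset.card_sdiff_add_card_inter t s
  rw [Finset.inter_comm t s] at h2
  omega

lemma even_card_symmDiff {α : Type*} [DecidableEq α] {s t : Finset α}
    (hs : Even s.card) (ht : Even t.card) : Even ((s ∆ t).card) := by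
  have h := card_symmDiff_add_two_mul_inter s t
  rw [Nat.even_iff] at *
  omega

lemma IsCirculation.symmDiff' [Fintype V] {G : SimpleGraph V} {a b : Finset (Sym2 V)}
    (ha : IsCirculation G a) (hb : IsCirculation G b) : IsCirculation G (a ∆ b) := by
  classical
  constructor
  · intro e he
    rw [Finset.mem_coe, Finset.mem_symmDiff] at he
    rcases he with ⟨h1, _⟩ | ⟨h1, _⟩
    exacts [ha.1 h1, hb.1 h1]
  · intro v
    have hfilt : ((a ∆ b).filter fun e => v ∈ e) =
        (a.filter fun e => v ∈ e) ∆ (b.filter fun e => v ∈ e) := by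
      ext e
      simp only [Finset.mem_filter, Finset.mem_symmDiff]
      tauto
    rw [hfilt]
    exact even_card_symmDiff (ha.2 v) (hb.2 v)

lemma two_mul_card_filter_le {α : Type*} [DecidableEq α] (Z : Finset α) (P : α → Prop)
    [DecidablePred P] (f : α → α) (hinv : ∀ x, f (f x) = x) (hmem : ∀ x ∈ Z, f x ∈ Z)
    (hflip : ∀ x ∈ Z, P x → ¬ P (f x)) :
    2 * (Z.filter P).card ≤ Z.card := by
  classical
  have himg : (Z.filter P).image f ⊆ Z.filter (fun x => ¬ P x) := by
    intro y hy
    simp only [Finset.mem_image, Finset.mem_filter] at hy ⊢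
    obtain ⟨x, ⟨hxZ, hxP⟩, rfl⟩ := hy
    exact ⟨hmem x hxZ, hflip x hxZ hxP⟩
  have hcard : ((Z.filter P).image f).card = (Z.filter P).card :=
    Finset.card_image_of_injOn (fun x _ y _ h => by rw [← hinv x, h, hinv])
  have h1 := Finset.card_filter_add_card_filter_not (s := Z) (p := P)
  have h2 := Finset.card_le_card himg
  omega

open SimpleGraph in
lemma exists_circulation_through [Fintype V] {G : SimpleGraph V} {s : Set (Sym2 V)}
    {u v : V} (huv : G.Adj u v) (hconn : (G.deleteEdges s).Connected) (hes : s(u, v) ∈ s) :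
    ∃ φ : Finset (Sym2 V), IsCirculation G φ ∧ s(u, v) ∈ φ ∧
      ∀ f ∈ s, f ≠ s(u, v) → f ∉ φ := by
  classical
  obtain ⟨w⟩ := hconn.preconnected v u
  let p : (G.deleteEdges s).Walk v u := w.toPath
  have hp : p.IsPath := w.toPath.2
  have hpe : ∀ e ∈ p.edges, e ∈ G.edgeSet ∧ e ∉ s := by
    intro e he
    have := p.edges_subset_edgeSet he
    rwa [SimpleGraph.edgeSet_deleteEdges, Set.mem_diff] at this
  let q : G.Walk v u := p.transfer G (fun e he => (hpe e he).1)
  have hqe : q.edges = p.edges := p.edges_transfer _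
  have hqt : q.IsTrail := (hp.transfer _).isTrail
  let c : G.Walk u u := SimpleGraph.Walk.cons huv q
  have hct : c.IsTrail := by
    rw [SimpleGraph.Walk.isTrail_cons]
    refine ⟨hqt, fun h => ?_⟩
    rw [hqe] at h
    exact (hpe _ h).2 hes
  refine ⟨c.edges.toFinset, ⟨?_, ?_⟩, ?_, ?_⟩
  · intro e he
    rw [Finset.mem_coe, List.mem_toFinset] at he
    exact c.edges_subset_edgeSet he
  · intro x
    have hset : c.edges.toFinset.filter (fun e => x ∈ e) =
        (c.edges.filter (fun e => x ∈ e)).toFinset := by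
      ext a
      simp [List.mem_filter]
    rw [hset, List.toFinset_card_of_nodup (hct.edges_nodup.filter _),
      ← List.countP_eq_length_filter]
    exact (hct.even_countP_edges_iff x).mpr (fun h => absurd rfl h)
  · simp [c]
  · intro f hf hne hmem
    rw [List.mem_toFinset, SimpleGraph.Walk.edges_cons, List.mem_cons] at hmem
    rcases hmem with h | h
    · exact hne h
    · rw [hqe] at h
      exact (hpe _ h).2 hf

end Helpers

set_option maxHeartbeats 1000000 in
/-- Let `G` have `n ≥ 2` vertices and `m` edges, and let `2^b ≥ n·m²`.
Then the number of `b`-tuples of binary circulations for which either (i) some non-cut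
edge avoids every `φ_i`, or (ii) some pair of distinct non-cut edges `e, f` that is not
a cut pair satisfies `e ∈ φ_i ↔ f ∈ φ_i` for all `i`, is at most `|Z|^b / n` (stated in
the equivalent product form `n · #bad ≤ |Z|^b`). -/
theorem count_bad_tuples_cutPairs [Fintype V] (G : SimpleGraph V) (hG : G.Connected)
    (hn : 2 ≤ Fintype.card V) (b : ℕ)
    (hb : Fintype.card V * Fintype.card G.edgeSet ^ 2 ≤ 2 ^ b) :
    Fintype.card V *
        Set.ncard {φ : Fin b → Finset (Sym2 V) |
          (∀ i, IsCirculation G (φ i)) ∧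
            ((∃ e ∈ G.edgeSet, ¬IsCutEdge G e ∧ ∀ i, e ∉ φ i) ∨
              ∃ e ∈ G.edgeSet, ∃ f ∈ G.edgeSet, e ≠ f ∧
                ¬IsCutEdge G e ∧ ¬IsCutEdge G f ∧ ¬IsCutPair G e f ∧
                  ∀ i, (e ∈ φ i ↔ f ∈ φ i))}
      ≤ (Set.ncard {ψ : Finset (Sym2 V) | IsCirculation G ψ}) ^ b := by
  classical
  set n := Fintype.card V with hn_def
  set m := G.edgeFinset.card with hm_def
  set Z : Finset (Finset (Sym2 V)) := Finset.univ.filter (fun ψ => IsCirculation G ψ)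
    with hZ_def
  set BadF : Finset (Fin b → Finset (Sym2 V)) := Finset.univ.filter (fun φ =>
      (∀ i, IsCirculation G (φ i)) ∧
        ((∃ e ∈ G.edgeSet, ¬IsCutEdge G e ∧ ∀ i, e ∉ φ i) ∨
          ∃ e ∈ G.edgeSet, ∃ f ∈ G.edgeSet, e ≠ f ∧
            ¬IsCutEdge G e ∧ ¬IsCutEdge G f ∧ ¬IsCutPair G e f ∧
              ∀ i, (e ∈ φ i ↔ f ∈ φ i))) with hBadF_def
  have hZcard : Set.ncard {ψ : Finset (Sym2 V) | IsCirculation G ψ} = Z.card := by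
    rw [← Set.ncard_coe_finset]
    congr 1
    ext ψ
    simp [hZ_def]
  have hBadcard : Set.ncard {φ : Fin b → Finset (Sym2 V) |
      (∀ i, IsCirculation G (φ i)) ∧
        ((∃ e ∈ G.edgeSet, ¬IsCutEdge G e ∧ ∀ i, e ∉ φ i) ∨
          ∃ e ∈ G.edgeSet, ∃ f ∈ G.edgeSet, e ≠ f ∧
            ¬IsCutEdge G e ∧ ¬IsCutEdge G f ∧ ¬IsCutPair G e f ∧
              ∀ i, (e ∈ φ i ↔ f ∈ φ i))} = BadF.card := by
    rw [← Set.ncard_coe_finset]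
    congr 1
    ext φ
    simp only [hBadF_def, Finset.coe_filter, Finset.mem_univ, true_and, Set.mem_setOf_eq]
  rw [hZcard, hBadcard]
  set E₁ : Finset (Sym2 V) := G.edgeFinset.filter (fun e => ¬ IsCutEdge G e) with hE₁_def
  set E₂ : Finset (Sym2 V × Sym2 V) := G.edgeFinset.offDiag.filter (fun p =>
      ¬IsCutEdge G p.1 ∧ ¬IsCutEdge G p.2 ∧ ¬IsCutPair G p.1 p.2) with hE₂_def
  set S₁ : Sym2 V → Finset (Finset (Sym2 V)) := fun e => Z.filter (fun ψ => e ∉ ψ)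
    with hS₁_def
  set S₂ : Sym2 V × Sym2 V → Finset (Finset (Sym2 V)) := fun p =>
      Z.filter (fun ψ => p.1 ∈ ψ ↔ p.2 ∈ ψ) with hS₂_def
  set T₁ : Sym2 V → Finset (Fin b → Finset (Sym2 V)) := fun e =>
      Fintype.piFinset (fun _ : Fin b => S₁ e) with hT₁_def
  set T₂ : Sym2 V × Sym2 V → Finset (Fin b → Finset (Sym2 V)) := fun p =>
      Fintype.piFinset (fun _ : Fin b => S₂ p) with hT₂_def
  -- Step A: union bound inclusion
  have hsub : BadF ⊆ E₁.biUnion T₁ ∪ E₂.biUnion T₂ := by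
    intro φ hφ
    rw [hBadF_def, Finset.mem_filter] at hφ
    obtain ⟨-, hcirc, hcase⟩ := hφ
    rcases hcase with ⟨e, heE, hnc, hall⟩ | ⟨e, heE, f, hfE, hne, hnc1, hnc2, hncp, hiff⟩
    · apply Finset.mem_union_left
      rw [Finset.mem_biUnion]
      refine ⟨e, ?_, ?_⟩
      · rw [hE₁_def, Finset.mem_filter, SimpleGraph.mem_edgeFinset]
        exact ⟨heE, hnc⟩
      · rw [hT₁_def, Fintype.mem_piFinset]
        intro i
        rw [hS₁_def, Finset.mem_filter]
        exact ⟨Finset.mem_filter.mpr ⟨Finset.mem_univ _, hcirc i⟩, hall i⟩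
    · apply Finset.mem_union_right
      rw [Finset.mem_biUnion]
      refine ⟨(e, f), ?_, ?_⟩
      · rw [hE₂_def, Finset.mem_filter, Finset.mem_offDiag]
        exact ⟨⟨SimpleGraph.mem_edgeFinset.mpr heE, SimpleGraph.mem_edgeFinset.mpr hfE, hne⟩,
          hnc1, hnc2, hncp⟩
      · rw [hT₂_def, Fintype.mem_piFinset]
        intro i
        rw [hS₂_def, Finset.mem_filter]
        exact ⟨Finset.mem_filter.mpr ⟨Finset.mem_univ _, hcirc i⟩, hiff i⟩
  -- Step B: each single-edge bad circulation set is at most half of Z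
  have hB : ∀ e ∈ E₁, 2 * (S₁ e).card ≤ Z.card := by
    intro e he
    rw [hE₁_def, Finset.mem_filter, SimpleGraph.mem_edgeFinset] at he
    obtain ⟨heE, hnc⟩ := he
    have hconn : (G.deleteEdges {e}).Connected := by
      by_contra h
      exact hnc ⟨heE, h⟩
    induction e using Sym2.ind with
    | _ u v =>
      have hadj : G.Adj u v := heE
      obtain ⟨ψ₀, hψ₀, heψ₀, -⟩ :=
        exists_circulation_through (s := {s(u, v)}) hadj hconn (Set.mem_singleton _)
      simp only [hS₁_def]
      refine two_mul_card_filter_le Z _ (fun ψ => ψ ∆ ψ₀)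
        (fun x => symmDiff_symmDiff_cancel_right ψ₀ x) ?_ ?_
      · intro x hx
        rw [hZ_def, Finset.mem_filter] at hx ⊢
        exact ⟨Finset.mem_univ _, hx.2.symmDiff' hψ₀⟩
      · intro x _ hP hP'
        rw [Finset.mem_symmDiff] at hP'
        push_neg at hP'
        exact hP (hP'.2 heψ₀)
  -- Step C: each pair bad circulation set is at most half of Z
  have hC : ∀ p ∈ E₂, 2 * (S₂ p).card ≤ Z.card := by
    rintro ⟨e, f⟩ hp
    rw [hE₂_def, Finset.mem_filter, Finset.mem_offDiag] at hp
    obtain ⟨⟨heE, hfE, hne⟩, hnc1, hnc2, hncp⟩ := hp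
    rw [SimpleGraph.mem_edgeFinset] at heE hfE
    have hconn : (G.deleteEdges {e, f}).Connected := by
      by_contra h
      exact hncp ⟨hne, heE, hfE, hnc1, hnc2, h⟩
    induction e using Sym2.ind with
    | _ u v =>
      have hadj : G.Adj u v := heE
      obtain ⟨ψ₀, hψ₀, heψ₀, hrest⟩ :=
        exists_circulation_through (s := {s(u, v), f}) hadj hconn (by simp)
      have hfψ₀ : f ∉ ψ₀ := hrest f (by simp) (fun h => hne h.symm)
      simp only [hS₂_def]
      refine two_mul_card_filter_le Z _ (fun ψ => ψ ∆ ψ₀)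
        (fun x => symmDiff_symmDiff_cancel_right ψ₀ x) ?_ ?_
      · intro x hx
        rw [hZ_def, Finset.mem_filter] at hx ⊢
        exact ⟨Finset.mem_univ _, hx.2.symmDiff' hψ₀⟩
      · intro x _ hP hP'
        have he' : s(u, v) ∈ x ∆ ψ₀ ↔ s(u, v) ∉ x := by
          rw [Finset.mem_symmDiff]
          tauto
        have hf' : f ∈ x ∆ ψ₀ ↔ f ∈ x := by
          rw [Finset.mem_symmDiff]
          tauto
        rw [he', hf'] at hP'
        tauto
  -- Step D: main counting bound
  have hT₁card : ∀ e, (T₁ e).card = (S₁ e).card ^ b := by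
    intro e
    rw [hT₁_def]
    simp [Fintype.card_piFinset, Finset.prod_const]
  have hT₂card : ∀ p, (T₂ p).card = (S₂ p).card ^ b := by
    intro p
    rw [hT₂_def]
    simp [Fintype.card_piFinset, Finset.prod_const]
  have key : 2 ^ b * BadF.card ≤ (E₁.card + E₂.card) * Z.card ^ b := by
    have h1 : BadF.card ≤ ∑ e ∈ E₁, (T₁ e).card + ∑ p ∈ E₂, (T₂ p).card :=
      le_trans (Finset.card_le_card hsub) (le_trans (Finset.card_union_le _ _)
        (add_le_add (Finset.card_biUnion_le) (Finset.card_biUnion_le)))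
    calc 2 ^ b * BadF.card
        ≤ 2 ^ b * (∑ e ∈ E₁, (T₁ e).card + ∑ p ∈ E₂, (T₂ p).card) :=
          Nat.mul_le_mul_left _ h1
      _ = ∑ e ∈ E₁, 2 ^ b * (T₁ e).card + ∑ p ∈ E₂, 2 ^ b * (T₂ p).card := by
          rw [mul_add, Finset.mul_sum, Finset.mul_sum]
      _ ≤ ∑ _e ∈ E₁, Z.card ^ b + ∑ _p ∈ E₂, Z.card ^ b := by
          refine add_le_add (Finset.sum_le_sum ?_) (Finset.sum_le_sum ?_)
          · intro e he
            rw [hT₁card, ← Nat.mul_pow]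
            exact Nat.pow_le_pow_left (hB e he) b
          · intro p hp
            rw [hT₂card, ← Nat.mul_pow]
            exact Nat.pow_le_pow_left (hC p hp) b
      _ = (E₁.card + E₂.card) * Z.card ^ b := by
          rw [Finset.sum_const, Finset.sum_const, smul_eq_mul, smul_eq_mul, add_mul]
  -- Step E: the number of bad events is at most m²
  have hE : E₁.card + E₂.card ≤ m * m := by
    have hE1 : E₁.card ≤ m := Finset.card_filter_le _ _
    have hE2 : E₂.card ≤ m * m - m := by
      have := Finset.card_filter_le G.edgeFinset.offDiag (fun p =>
        ¬IsCutEdge G p.1 ∧ ¬IsCutEdge G p.2 ∧ ¬IsCutPair G p.1 p.2)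
      rwa [Finset.offDiag_card] at this
    have hmm : m ≤ m * m := by
      rcases Nat.eq_zero_or_pos m with h0 | h1
      · rw [h0]
      · calc m = 1 * m := (one_mul m).symm
          _ ≤ m * m := Nat.mul_le_mul_right m h1
    calc E₁.card + E₂.card ≤ m + (m * m - m) := add_le_add hE1 hE2
      _ = m * m := Nat.add_sub_cancel' hmm
  -- Final computation
  have hm' : Fintype.card G.edgeSet = m := (SimpleGraph.edgeFinset_card).symm
  have hnm : n * (m * m) ≤ 2 ^ b := by
    calc n * (m * m) = n * m ^ 2 := by ring
      _ ≤ 2 ^ b := by rw [← hm']; exact hb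
  refine Nat.le_of_mul_le_mul_left ?_ (Nat.pow_pos (by norm_num) : 0 < 2 ^ b)
  calc 2 ^ b * (n * BadF.card) = n * (2 ^ b * BadF.card) := by ring
    _ ≤ n * ((E₁.card + E₂.card) * Z.card ^ b) := Nat.mul_le_mul_left _ key
    _ ≤ n * ((m * m) * Z.card ^ b) :=
        Nat.mul_le_mul_left _ (Nat.mul_le_mul_right _ hE)
    _ = (n * (m * m)) * Z.card ^ b := by ring
    _ ≤ 2 ^ b * Z.card ^ b := Nat.mul_le_mul_right _ hnm
end
end

section
/- Let G = (V, E) be a finite connected undirected simple graph, let C be the edge set of a cycle in G, and let K be a cut class of G. If K ∩ C ≠ ∅, then K ⊆ C. -/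
open scoped Classical symmDiff

noncomputable section

variable {V : Type*}

/-- If the endpoints of `e = s(a,b)` remain reachable after deleting `e`, then any two
vertices reachable in `G` are reachable in `G` minus `e`. -/
lemma reachable_del_aux {G : SimpleGraph V} {a b : V}
    (h : (G \ SimpleGraph.fromEdgeSet {s(a, b)}).Reachable a b)
    {x y : V} (hxy : G.Reachable x y) :
    (G \ SimpleGraph.fromEdgeSet {s(a, b)}).Reachable x y := by
  obtain ⟨p⟩ := hxy
  induction p with
  | nil => exact SimpleGraph.Reachable.refl _
  | @cons u v w hadj p ih =>
    refine SimpleGraph.Reachable.trans ?_ ih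
    by_cases he : s(u, v) = s(a, b)
    · rw [Sym2.eq_iff] at he
      rcases he with ⟨rfl, rfl⟩ | ⟨rfl, rfl⟩
      · exact h
      · exact h.symm
    · exact SimpleGraph.Adj.reachable (by
        simp only [SimpleGraph.sdiff_adj, SimpleGraph.fromEdgeSet_adj, Set.mem_singleton_iff]
        exact ⟨hadj, fun hh => he hh.1⟩)

/-- If `C` is the edge set of a cycle of a finite connected simple
graph `G` and `K` is a cut class of `G` with `K ∩ C ≠ ∅`, then `K ⊆ C`. -/
theorem cutClass_subset_cycle [Fintype V] (G : SimpleGraph V) (hG : G.Connected)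
    (K : Finset (Sym2 V)) (hK : IsCutClass G K)
    (C : Finset (Sym2 V)) (u : V) (w : G.Walk u u) (hw : w.IsCycle)
    (hC : C = w.edges.toFinset)
    (hKC : (K ∩ C).Nonempty) :
    K ⊆ C := by
  obtain ⟨e, heKC⟩ := hKC
  rw [Finset.mem_inter] at heKC
  obtain ⟨heK, heC⟩ := heKC
  intro f hfK
  by_cases hfe : f = e
  · exact hfe ▸ heC
  by_contra hfC
  obtain ⟨hne, heE, hfE, -, hfce, hdisc⟩ := hK.2.1 e heK f hfK (Ne.symm hfe)
  set H := G.deleteEdges {f} with hH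
  have hHconn : H.Connected := by
    by_contra h
    exact hfce ⟨hfE, h⟩
  have hsub : ∀ x ∈ w.edges, x ∈ H.edgeSet := by
    intro x hx
    rw [hH, SimpleGraph.edgeSet_deleteEdges]
    refine ⟨w.edges_subset_edgeSet hx, ?_⟩
    simp only [Set.mem_singleton_iff]
    rintro rfl
    exact hfC (hC ▸ List.mem_toFinset.mpr hx)
  set w' := w.transfer H hsub with hw'def
  have hw' : w'.IsCycle := hw.transfer hsub
  have heW : e ∈ w'.edges := by
    rw [hw'def, SimpleGraph.Walk.edges_transfer]
    exact List.mem_toFinset.mp (hC ▸ heC)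
  obtain ⟨a, b, rfl⟩ : ∃ a b, e = s(a, b) := by
    induction e using Sym2.ind with
    | _ a b => exact ⟨a, b, rfl⟩
  have hreach : (H \ SimpleGraph.fromEdgeSet {s(a, b)}).Reachable a b :=
    (SimpleGraph.adj_and_reachable_delete_edges_iff_exists_cycle.mpr ⟨u, w', hw', heW⟩).2
  have hgraph : H \ SimpleGraph.fromEdgeSet {s(a, b)} = G.deleteEdges {s(a, b), f} := by
    show (G.deleteEdges {f}).deleteEdges {s(a, b)} = _
    rw [SimpleGraph.deleteEdges_deleteEdges]
    congr 1
    rw [Set.union_comm, Set.singleton_union]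
  haveI := hHconn.nonempty
  refine hdisc (SimpleGraph.Connected.mk fun x y => ?_)
  rw [← hgraph]
  exact reachable_del_aux hreach (hHconn.preconnected x y)
end
end

section
/- Let G = (V, E) be a finite connected undirected simple graph with no cut edges (i.e., 2-edge-connected), let T be a spanning tree of G, and let K be a cut class of G. Then there exists a non-tree edge e ∈ E \ E(T) such that K ⊆ C_e, where C_e is the fundamental cycle of e with respect to T. -/
open scoped Classical symmDiff
open SimpleGraph

noncomputable section

variable {V : Type*}

private lemma edges_mapLe {G G' : SimpleGraph V} (h : G ≤ G') {a b : V} (p : G.Walk a b) :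
    (p.mapLe h).edges = p.edges := by
  have hid : ⇑(Hom.ofLE h) = id := rfl
  simp [Walk.mapLe, Walk.edges_map, hid, Sym2.map_id']

private lemma conn_delete_aux {G : SimpleGraph V} (hG : G.Connected) {x y : V}
    (hr : (G.deleteEdges {s(x, y)}).Reachable x y) :
    (G.deleteEdges {s(x, y)}).Connected := by
  rw [SimpleGraph.connected_iff]
  refine ⟨fun a b => ?_, hG.nonempty⟩
  obtain ⟨w⟩ := hG.preconnected a b
  induction w with
  | nil => exact Reachable.refl _
  | @cons u v c hadj p ih =>
    refine Reachable.trans ?_ ih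
    by_cases he : s(u, v) = s(x, y)
    · rw [Sym2.eq_iff] at he
      rcases he with ⟨rfl, rfl⟩ | ⟨rfl, rfl⟩
      · exact hr
      · exact hr.symm
    · exact (SimpleGraph.deleteEdges_adj.mpr ⟨hadj, by simpa using he⟩).reachable

private lemma cutPair_mem_cycle {G : SimpleGraph V} {f g : Sym2 V}
    (hpair : IsCutPair G f g) {u : V} {p : G.Walk u u}
    (hp : p.IsCycle) (hf : f ∈ p.edges) : g ∈ p.edges := by
  obtain ⟨hne, hfe, hge, _, hncg, hdis⟩ := hpair
  by_contra hg
  have hGg : (G.deleteEdges {g}).Connected := by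
    by_contra h; exact hncg ⟨hge, h⟩
  have hpg : ∀ e ∈ p.edges, e ∉ ({g} : Set (Sym2 V)) := fun e he hh => by
    simp only [Set.mem_singleton_iff] at hh; exact hg (hh ▸ he)
  have hp'c : (p.toDeleteEdges {g} hpg).IsCycle := Walk.IsCycle.toDeleteEdges (s := {g}) (h := hp) (hp := hpg)
  have hf' : f ∈ (p.toDeleteEdges {g} hpg).edges := by
    rwa [Walk.edges_transfer]
  have hnb : ¬(G.deleteEdges {g}).IsBridge f := fun hb =>
    (SimpleGraph.isBridge_iff_forall_cycle_notMem (by rw [SimpleGraph.edgeSet_deleteEdges]; exact ⟨hfe, by simpa using hne⟩)).mp hb _ hp'c hf'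
  have hfe' : f ∈ (G.deleteEdges {g}).edgeSet := by
    rw [SimpleGraph.edgeSet_deleteEdges]
    exact ⟨hfe, by simpa using hne⟩
  obtain ⟨x, y, rfl⟩ : ∃ x y, f = s(x, y) :=
    Sym2.ind (f := fun z => ∃ x y, z = s(x, y)) (fun x y => ⟨x, y, rfl⟩) f
  have hadj' : (G.deleteEdges {g}).Adj x y := hfe'
  have hreach : ((G.deleteEdges {g}).deleteEdges {s(x, y)}).Reachable x y := by
    have h2 := SimpleGraph.isBridge_iff.not.mp hnb
    push_neg at h2
    exact h2
  have hconn := conn_delete_aux hGg hreach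
  rw [SimpleGraph.deleteEdges_deleteEdges] at hconn
  apply hdis
  have : ({s(x, y), g} : Set (Sym2 V)) = {g} ∪ {s(x, y)} := by
    ext e; simp [or_comm]
  rwa [this]

private lemma exists_crossing {G' : SimpleGraph V} {S : Set V} :
    ∀ {a b : V}, G'.Walk a b → a ∈ S → b ∉ S → ∃ u v, G'.Adj u v ∧ u ∈ S ∧ v ∉ S := by
  intro a b w
  induction w with
  | nil => intro h h'; exact absurd h h'
  | @cons u v c hadj p ih =>
    intro ha hb
    by_cases hv : v ∈ S
    · exact ih hv hb
    · exact ⟨u, v, hadj, ha, hv⟩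

/-- If `G` is a finite connected simple graph with no cut edges,
`T` a spanning tree of `G`, and `K` a cut class of `G`, then there is a non-tree edge
`e` whose fundamental cycle (the unique cycle of `T ∪ {e}`) contains `K`. -/
theorem cutClass_subset_fundamental_cycle [Fintype V] (G T : SimpleGraph V)
    (hG : G.Connected) (h2ec : ∀ e : Sym2 V, ¬IsCutEdge G e)
    (hT : IsSpanningTree G T)
    (K : Finset (Sym2 V)) (hK : IsCutClass G K) :
    ∃ e ∈ G.edgeFinset \ T.edgeFinset, ∃ (u : V)
      (w : (T ⊔ SimpleGraph.fromEdgeSet {e}).Walk u u),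
        w.IsCycle ∧ K ⊆ w.edges.toFinset := by
  obtain ⟨hTle, hTt⟩ := hT
  have hK1 := hK.1
  obtain ⟨f, hfK⟩ := Finset.card_pos.mp (by omega : 0 < K.card)
  obtain ⟨g0, hg0K, hg0f⟩ := Finset.exists_mem_ne hK1 f
  have hpair0 : IsCutPair G f g0 := hK.2.1 f hfK g0 hg0K (Ne.symm hg0f)
  have hfE : f ∈ G.edgeSet := hpair0.2.1
  suffices h : ∃ x y : V, G.Adj x y ∧ s(x, y) ∉ T.edgeSet ∧
      ∃ w : (T ⊔ fromEdgeSet {s(x, y)}).Walk x x, w.IsCycle ∧ f ∈ w.edges by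
    obtain ⟨x, y, hGxy, hxyT, w, hwc, hfw⟩ := h
    have hle' : T ⊔ fromEdgeSet {s(x, y)} ≤ G := by
      refine sup_le hTle ?_
      have hsub : ({s(x, y)} : Set (Sym2 V)) ⊆ G.edgeSet := by
        simp [SimpleGraph.mem_edgeSet, hGxy]
      calc fromEdgeSet {s(x, y)} ≤ fromEdgeSet G.edgeSet := fromEdgeSet_mono hsub
        _ = G := fromEdgeSet_edgeSet G
    refine ⟨s(x, y), ?_, x, w, hwc, ?_⟩
    · simp only [Finset.mem_sdiff, SimpleGraph.mem_edgeFinset]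
      exact ⟨hGxy, hxyT⟩
    · intro g hgK
      rw [List.mem_toFinset]
      have hwGc : (w.mapLe hle').IsCycle := (Walk.mapLe_isCycle hle').mpr hwc
      have hedges : (w.mapLe hle').edges = w.edges := edges_mapLe _ _
      by_cases hgf : g = f
      · exact hgf ▸ hfw
      · have hpair : IsCutPair G f g := hK.2.1 f hfK g hgK (Ne.symm hgf)
        have hmem := cutPair_mem_cycle hpair hwGc (by rw [hedges]; exact hfw)
        rwa [hedges] at hmem
  by_cases hfT : f ∈ T.edgeSet
  · obtain ⟨a, b, rfl⟩ : ∃ a b, f = s(a, b) :=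
      Sym2.ind (f := fun z => ∃ a b, z = s(a, b)) (fun a b => ⟨a, b, rfl⟩) f
    set T' := T.deleteEdges {s(a, b)} with hT'
    have hbr : ¬T'.Reachable a b := by
      have hb : T.IsBridge s(a, b) :=
        (isAcyclic_iff_forall_edge_isBridge.mp hTt.2) hfT
      exact isBridge_iff.mp hb
    set S : Set V := {v | T'.Reachable a v} with hS
    have haS : a ∈ S := Reachable.refl a
    have hbS : b ∉ S := hbr
    have hGf : (G.deleteEdges {s(a, b)}).Connected := by
      have hcut := h2ec s(a, b)
      rw [IsCutEdge, not_and, not_not] at hcut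
      exact hcut hfE
    obtain ⟨w0⟩ := hGf.preconnected a b
    obtain ⟨u, v, huv, huS, hvS⟩ := exists_crossing w0 haS hbS
    have hGuv : G.Adj u v := (SimpleGraph.deleteEdges_adj.mp huv).1
    have hne : s(u, v) ≠ s(a, b) := by
      simpa using (SimpleGraph.deleteEdges_adj.mp huv).2
    have huvT : s(u, v) ∉ T.edgeSet := by
      intro h
      apply hvS
      have hadj : T'.Adj u v := by
        rw [hT']
        exact SimpleGraph.deleteEdges_adj.mpr ⟨h, by simpa using hne⟩
      exact huS.trans hadj.reachable
    obtain ⟨p0, hp0⟩ : ∃ p : T.Walk v u, p.IsPath :=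
      ⟨((hTt.1.preconnected v u).some.toPath : T.Path v u).1,
       ((hTt.1.preconnected v u).some.toPath : T.Path v u).2⟩
    have hfp0 : s(a, b) ∈ p0.edges := by
      by_contra hfp
      apply hvS
      have hall : ∀ e ∈ p0.edges, e ∉ ({s(a, b)} : Set (Sym2 V)) := fun e he hh => by
        simp only [Set.mem_singleton_iff] at hh; exact hfp (hh ▸ he)
      have hr : T'.Reachable v u := ⟨p0.toDeleteEdges {s(a, b)} hall⟩
      exact huS.trans hr.symm
    have hadjH : (T ⊔ fromEdgeSet {s(u, v)}).Adj u v :=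
      (SimpleGraph.sup_adj _ _ _ _).mpr (Or.inr ((SimpleGraph.fromEdgeSet_adj _).mpr ⟨rfl, hGuv.ne⟩))
    refine ⟨u, v, hGuv, huvT, Walk.cons hadjH (p0.mapLe le_sup_left), ?_, ?_⟩
    · rw [Walk.cons_isCycle_iff]
      refine ⟨(Walk.mapLe_isPath le_sup_left).mpr hp0, ?_⟩
      rw [edges_mapLe]
      exact fun h => huvT (p0.edges_subset_edgeSet h)
    · rw [Walk.edges_cons]
      exact List.mem_cons.mpr (Or.inr (by rw [edges_mapLe]; exact hfp0))
  · obtain ⟨a, b, rfl⟩ : ∃ a b, f = s(a, b) :=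
      Sym2.ind (f := fun z => ∃ a b, z = s(a, b)) (fun a b => ⟨a, b, rfl⟩) f
    have hGab : G.Adj a b := hfE
    have hadjH : (T ⊔ fromEdgeSet {s(a, b)}).Adj a b :=
      (SimpleGraph.sup_adj _ _ _ _).mpr (Or.inr ((SimpleGraph.fromEdgeSet_adj _).mpr ⟨rfl, hGab.ne⟩))
    obtain ⟨q, hq⟩ : ∃ p : T.Walk b a, p.IsPath :=
      ⟨((hTt.1.preconnected b a).some.toPath : T.Path b a).1,
       ((hTt.1.preconnected b a).some.toPath : T.Path b a).2⟩
    refine ⟨a, b, hGab, hfT, Walk.cons hadjH (q.mapLe le_sup_left), ?_, ?_⟩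
    · rw [Walk.cons_isCycle_iff]
      refine ⟨(Walk.mapLe_isPath le_sup_left).mpr hq, ?_⟩
      rw [edges_mapLe]
      exact fun h => hfT (q.edges_subset_edgeSet h)
    · rw [Walk.edges_cons]
      exact List.mem_cons.mpr (Or.inl rfl)
end
end

section
/- Let G = (V, E) be a finite connected undirected simple graph, T a spanning tree of G, and e, f two distinct edges, neither of which is a cut edge. If {e, f} is not a cut pair, then there exists a non-tree edge g ∈ E \ E(T) whose fundamental cycle C_g contains exactly one of e and f, i.e., |C_g ∩ {e, f}| = 1. -/
open scoped Classical symmDiff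

noncomputable section

variable {V : Type*}

private lemma inter_pair_card_one {α : Type*} [DecidableEq α] {A : Finset α} {e f : α}
    (he : e ∈ A) (hf : f ∉ A) : (A ∩ ({e, f} : Finset α)).card = 1 := by
  have h : A ∩ ({e, f} : Finset α) = {e} := by
    ext z
    simp only [Finset.mem_inter, Finset.mem_insert, Finset.mem_singleton]
    constructor
    · rintro ⟨hz, rfl | rfl⟩
      · rfl
      · exact absurd hz hf
    · rintro rfl
      exact ⟨he, Or.inl rfl⟩
  rw [h, Finset.card_singleton]

private lemma two_comp {T : SimpleGraph V} (hTc : T.Connected) {a b : V}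
    (hab : T.Adj a b) (x : V) :
    (T.deleteEdges {s(a, b)}).Reachable a x ∨ (T.deleteEdges {s(a, b)}).Reachable b x := by
  have key : ∀ {c y : V} (_ : T.Walk c y),
      ((T.deleteEdges {s(a, b)}).Reachable a c ∨ (T.deleteEdges {s(a, b)}).Reachable b c) →
      ((T.deleteEdges {s(a, b)}).Reachable a y ∨ (T.deleteEdges {s(a, b)}).Reachable b y) := by
    intro c y w
    induction w with
    | nil => exact id
    | @cons c c' y h w ih =>
      intro hc
      apply ih
      by_cases hcc : s(c, c') = s(a, b)
      · rw [Sym2.eq_iff] at hcc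
        rcases hcc with ⟨rfl, rfl⟩ | ⟨rfl, rfl⟩
        · exact Or.inr (SimpleGraph.Reachable.refl _)
        · exact Or.inl (SimpleGraph.Reachable.refl _)
      · have hadj : (T.deleteEdges {s(a, b)}).Adj c c' := by
          rw [SimpleGraph.deleteEdges_adj]
          exact ⟨h, by simpa using hcc⟩
        rcases hc with hc | hc
        · exact Or.inl (hc.trans hadj.reachable)
        · exact Or.inr (hc.trans hadj.reachable)
  obtain ⟨w⟩ := hTc.preconnected a x
  exact key w (Or.inl (SimpleGraph.Reachable.refl a))

private lemma reach_same_side {T : SimpleGraph V} (hTc : T.Connected) {a b : V}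
    (hab : T.Adj a b) {x y : V}
    (h : (T.deleteEdges {s(a, b)}).Reachable a x ↔ (T.deleteEdges {s(a, b)}).Reachable a y) :
    (T.deleteEdges {s(a, b)}).Reachable x y := by
  by_cases hx : (T.deleteEdges {s(a, b)}).Reachable a x
  · exact hx.symm.trans (h.mp hx)
  · have hx' := (two_comp hTc hab x).resolve_left hx
    have hy' := (two_comp hTc hab y).resolve_left fun hy => hx (h.mpr hy)
    exact hx'.symm.trans hy'

private lemma tree_bridge {T : SimpleGraph V} (hT : T.IsTree) {a b : V} (hab : T.Adj a b) :
    ¬(T.deleteEdges {s(a, b)}).Reachable a b := by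
  have h := SimpleGraph.isAcyclic_iff_forall_edge_isBridge.mp hT.IsAcyclic
    (T.mem_edgeSet.mpr hab)
  rw [SimpleGraph.isBridge_iff] at h
  exact h

private lemma build_cycle [Fintype V] {G T : SimpleGraph V} {e f g : Sym2 V} {x y : V}
    (hgG : g ∈ G.edgeSet) (hgT : g ∉ T.edgeSet) (hg : g = s(x, y))
    (p : T.Walk y x) (hp : p.IsPath)
    (hcard : ((g :: p.edges).toFinset ∩ ({e, f} : Finset (Sym2 V))).card = 1) :
    ∃ g' ∈ G.edgeFinset \ T.edgeFinset, ∃ (u : V)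
      (w : (T ⊔ SimpleGraph.fromEdgeSet {g'}).Walk u u),
        w.IsCycle ∧ (w.edges.toFinset ∩ ({e, f} : Finset (Sym2 V))).card = 1 := by
  subst hg
  have hxy : x ≠ y := (G.mem_edgeSet.mp hgG).ne
  have hTH : ∀ ed ∈ p.edges, ed ∈ (T ⊔ SimpleGraph.fromEdgeSet {s(x, y)}).edgeSet := fun ed hed =>
    SimpleGraph.edgeSet_mono le_sup_left (p.edges_subset_edgeSet hed)
  have hadj : (T ⊔ SimpleGraph.fromEdgeSet {s(x, y)}).Adj x y := by
    have h1 : (SimpleGraph.fromEdgeSet {s(x, y)}).Adj x y := by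
      rw [SimpleGraph.fromEdgeSet_adj]
      exact ⟨rfl, hxy⟩
    exact (SimpleGraph.sup_adj _ _ _ _).mpr (Or.inr h1)
  have hq : (p.transfer _ hTH).IsPath := hp.transfer hTH
  have hgq : s(x, y) ∉ (p.transfer _ hTH).edges := by
    rw [SimpleGraph.Walk.edges_transfer]
    exact fun h => hgT (p.edges_subset_edgeSet h)
  refine ⟨s(x, y), ?_, x, SimpleGraph.Walk.cons hadj (p.transfer _ hTH), ?_, ?_⟩
  · rw [Finset.mem_sdiff, SimpleGraph.mem_edgeFinset, SimpleGraph.mem_edgeFinset]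
    exact ⟨hgG, hgT⟩
  · exact SimpleGraph.Path.cons_isCycle ⟨p.transfer _ hTH, hq⟩ hadj hgq
  · have h2 : (SimpleGraph.Walk.cons hadj (p.transfer _ hTH)).edges = s(x, y) :: p.edges := by
      rw [SimpleGraph.Walk.edges_cons, SimpleGraph.Walk.edges_transfer]
    rw [h2]
    exact hcard

private lemma case_nontree [Fintype V] (G T : SimpleGraph V)
    (hT : IsSpanningTree G T) (u v a b : V) (hef : s(u, v) ≠ s(a, b))
    (he : s(u, v) ∈ G.edgeSet)
    (hD : (G.deleteEdges {s(u, v), s(a, b)}).Connected)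
    (henT : s(u, v) ∉ T.edgeSet) :
    ∃ g ∈ G.edgeFinset \ T.edgeFinset, ∃ (u' : V)
      (w : (T ⊔ SimpleGraph.fromEdgeSet {g}).Walk u' u'),
        w.IsCycle ∧ (w.edges.toFinset ∩ ({s(u, v), s(a, b)} : Finset (Sym2 V))).card = 1 := by
  have hTc : T.Connected := hT.2.isConnected
  by_cases hfT : s(a, b) ∈ T.edgeSet
  · have hab : T.Adj a b := T.mem_edgeSet.mp hfT
    have hbr := tree_bridge hT.2 hab
    by_cases hside : (T.deleteEdges {s(a, b)}).Reachable a u ↔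
        (T.deleteEdges {s(a, b)}).Reachable a v
    · -- u, v on the same side of the f-cut: g := e works
      obtain ⟨p0⟩ := (reach_same_side hTc hab hside).symm
      have hp1 : p0.bypass.IsPath := p0.bypass_isPath
      have hsub : ∀ ed ∈ p0.bypass.edges, ed ∈ T.edgeSet := fun ed hed =>
        SimpleGraph.edgeSet_mono (T.deleteEdges_le _) (p0.bypass.edges_subset_edgeSet hed)
      apply build_cycle he henT rfl (p0.bypass.transfer T hsub) (hp1.transfer hsub)
      rw [SimpleGraph.Walk.edges_transfer]
      have hfe : s(a, b) ∉ (s(u, v) :: p0.bypass.edges) := by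
        intro h
        rcases List.mem_cons.mp h with h | h
        · exact hef h.symm
        · have h2 := p0.bypass.edges_subset_edgeSet h
          rw [SimpleGraph.edgeSet_deleteEdges] at h2
          exact h2.2 rfl
      exact inter_pair_card_one (List.mem_toFinset.mpr (List.mem_cons_self))
        (fun h => hfe (List.mem_toFinset.mp h))
    · -- u, v on opposite sides: find a non-tree edge crossing the f-cut
      obtain ⟨wD⟩ := hD.preconnected a b
      obtain ⟨d, hd, hd1, hd2⟩ := wD.exists_boundary_dart
        {z | (T.deleteEdges {s(a, b)}).Reachable a z} (SimpleGraph.Reachable.refl a) hbr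
      have hgD := d.edge_mem
      rw [SimpleGraph.edgeSet_deleteEdges] at hgD
      obtain ⟨hgG, hgnot⟩ := hgD
      have hge : d.edge ≠ s(u, v) := fun h => hgnot (by rw [h]; exact Set.mem_insert _ _)
      have hgf : d.edge ≠ s(a, b) := fun h => hgnot (by rw [h]; exact Set.mem_insert_of_mem _ rfl)
      have hedge : d.edge = s(d.fst, d.snd) := rfl
      have hgT : d.edge ∉ T.edgeSet := by
        intro h
        have hadj : (T.deleteEdges {s(a, b)}).Adj d.fst d.snd := by
          rw [SimpleGraph.deleteEdges_adj]
          refine ⟨T.mem_edgeSet.mp (by rw [← hedge]; exact h), ?_⟩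
          rw [Set.mem_singleton_iff, ← hedge]
          exact hgf
        exact hd2 (hd1.trans hadj.reachable)
      obtain ⟨p0⟩ := hTc.preconnected d.snd d.fst
      have hp1 : p0.bypass.IsPath := p0.bypass_isPath
      have hfin : s(a, b) ∈ p0.bypass.edges := by
        by_contra hfp
        have hreach : (T.deleteEdges {s(a, b)}).Reachable d.snd d.fst :=
          ⟨p0.bypass.toDeleteEdges {s(a, b)} (fun ed hed => by
            simp only [Set.mem_singleton_iff]
            rintro rfl
            exact hfp hed)⟩
        exact hd2 (hd1.trans hreach.symm)
      apply build_cycle hgG hgT hedge p0.bypass hp1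
      have hein : s(u, v) ∉ (d.edge :: p0.bypass.edges) := by
        intro h
        rcases List.mem_cons.mp h with h | h
        · exact hge h.symm
        · exact henT (p0.bypass.edges_subset_edgeSet h)
      rw [Finset.pair_comm]
      exact inter_pair_card_one (List.mem_toFinset.mpr (List.mem_cons_of_mem _ hfin))
        (fun h => hein (List.mem_toFinset.mp h))
  · -- f is not a tree edge either: g := e works with any tree path
    obtain ⟨p0⟩ := hTc.preconnected v u
    apply build_cycle he henT rfl p0.bypass p0.bypass_isPath
    have hfe : s(a, b) ∉ (s(u, v) :: p0.bypass.edges) := by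
      intro h
      rcases List.mem_cons.mp h with h | h
      · exact hef h.symm
      · exact hfT (p0.bypass.edges_subset_edgeSet h)
    exact inter_pair_card_one (List.mem_toFinset.mpr (List.mem_cons_self))
      (fun h => hfe (List.mem_toFinset.mp h))

set_option maxHeartbeats 1000000 in
private lemma case_both [Fintype V] (G T : SimpleGraph V)
    (hT : IsSpanningTree G T) (u v a b : V) (hef : s(u, v) ≠ s(a, b))
    (hD : (G.deleteEdges {s(u, v), s(a, b)}).Connected)
    (heT : s(u, v) ∈ T.edgeSet) (hfT : s(a, b) ∈ T.edgeSet) :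
    ∃ g ∈ G.edgeFinset \ T.edgeFinset, ∃ (u' : V)
      (w : (T ⊔ SimpleGraph.fromEdgeSet {g}).Walk u' u'),
        w.IsCycle ∧ (w.edges.toFinset ∩ ({s(u, v), s(a, b)} : Finset (Sym2 V))).card = 1 := by
  have hTc : T.Connected := hT.2.isConnected
  have huv : T.Adj u v := T.mem_edgeSet.mp heT
  have hab : T.Adj a b := T.mem_edgeSet.mp hfT
  have hbrE := tree_bridge hT.2 huv
  have hbrF := tree_bridge hT.2 hab
  have hTeab : (T.deleteEdges {s(u, v)}).Adj a b := by
    rw [SimpleGraph.deleteEdges_adj]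
    refine ⟨hab, ?_⟩
    rw [Set.mem_singleton_iff]
    exact fun h => hef h.symm
  -- every vertex in W := {z | exactly one of (Te-reach from u-side, Tf-reach from a-side)}
  have key : ∀ s0 t0 : V,
      ¬((T.deleteEdges {s(u, v)}).Reachable u s0 ↔ (T.deleteEdges {s(a, b)}).Reachable a s0) →
      ((T.deleteEdges {s(u, v)}).Reachable u t0 ↔ (T.deleteEdges {s(a, b)}).Reachable a t0) →
      ∃ g ∈ G.edgeFinset \ T.edgeFinset, ∃ (u' : V)
        (w : (T ⊔ SimpleGraph.fromEdgeSet {g}).Walk u' u'),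
          w.IsCycle ∧ (w.edges.toFinset ∩ ({s(u, v), s(a, b)} : Finset (Sym2 V))).card = 1 := by
    intro s0 t0 hs0 ht0
    obtain ⟨wD⟩ := hD.preconnected s0 t0
    obtain ⟨d, hd, hd1, hd2⟩ := wD.exists_boundary_dart
      {z | ¬((T.deleteEdges {s(u, v)}).Reachable u z ↔
        (T.deleteEdges {s(a, b)}).Reachable a z)} hs0 (not_not.mpr ht0)
    have hd2' : (T.deleteEdges {s(u, v)}).Reachable u d.snd ↔
        (T.deleteEdges {s(a, b)}).Reachable a d.snd := not_not.mp hd2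
    have hedge : d.edge = s(d.fst, d.snd) := rfl
    have hgD := d.edge_mem
    rw [SimpleGraph.edgeSet_deleteEdges] at hgD
    obtain ⟨hgG, hgnot⟩ := hgD
    have hge : d.edge ≠ s(u, v) := fun h => hgnot (by rw [h]; exact Set.mem_insert _ _)
    have hgf : d.edge ≠ s(a, b) := fun h => hgnot (by rw [h]; exact Set.mem_insert_of_mem _ rfl)
    have hgT : d.edge ∉ T.edgeSet := by
      intro h
      have hTadj : T.Adj d.fst d.snd := T.mem_edgeSet.mp (by rw [← hedge]; exact h)
      have h1 : (T.deleteEdges {s(u, v)}).Adj d.fst d.snd := by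
        rw [SimpleGraph.deleteEdges_adj]
        refine ⟨hTadj, ?_⟩
        rw [Set.mem_singleton_iff, ← hedge]
        exact hge
      have h2 : (T.deleteEdges {s(a, b)}).Adj d.fst d.snd := by
        rw [SimpleGraph.deleteEdges_adj]
        refine ⟨hTadj, ?_⟩
        rw [Set.mem_singleton_iff, ← hedge]
        exact hgf
      have e1 : (T.deleteEdges {s(u, v)}).Reachable u d.fst ↔
          (T.deleteEdges {s(u, v)}).Reachable u d.snd :=
        ⟨fun hr => hr.trans h1.reachable, fun hr => hr.trans h1.reachable.symm⟩
      have e2 : (T.deleteEdges {s(a, b)}).Reachable a d.fst ↔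
          (T.deleteEdges {s(a, b)}).Reachable a d.snd :=
        ⟨fun hr => hr.trans h2.reachable, fun hr => hr.trans h2.reachable.symm⟩
      exact hd1 (e1.trans (hd2'.trans e2.symm))
    by_cases hPR : (T.deleteEdges {s(u, v)}).Reachable u d.fst ↔
        (T.deleteEdges {s(u, v)}).Reachable u d.snd
    · -- d crosses the f-cut only
      have hQS : ¬((T.deleteEdges {s(a, b)}).Reachable a d.fst ↔
          (T.deleteEdges {s(a, b)}).Reachable a d.snd) := fun h =>
        hd1 (hPR.trans (hd2'.trans h.symm))
      obtain ⟨p0⟩ := (reach_same_side hTc huv hPR).symm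
      have hp1 : p0.bypass.IsPath := p0.bypass_isPath
      have hsub : ∀ ed ∈ p0.bypass.edges, ed ∈ T.edgeSet := fun ed hed =>
        SimpleGraph.edgeSet_mono (T.deleteEdges_le _) (p0.bypass.edges_subset_edgeSet hed)
      have hfin : s(a, b) ∈ p0.bypass.edges := by
        by_contra hfp
        have hreach : (T.deleteEdges {s(a, b)}).Reachable d.snd d.fst :=
          ⟨(p0.bypass.transfer T hsub).toDeleteEdges {s(a, b)} (fun ed hed => by
            rw [SimpleGraph.Walk.edges_transfer] at hed
            simp only [Set.mem_singleton_iff]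
            rintro rfl
            exact hfp hed)⟩
        exact hQS ⟨fun hr => hr.trans hreach.symm, fun hr => hr.trans hreach⟩
      have hein : s(u, v) ∉ p0.bypass.edges := by
        intro h
        have h2 := p0.bypass.edges_subset_edgeSet h
        rw [SimpleGraph.edgeSet_deleteEdges] at h2
        exact h2.2 rfl
      apply build_cycle hgG hgT hedge (p0.bypass.transfer T hsub) (hp1.transfer hsub)
      rw [SimpleGraph.Walk.edges_transfer]
      have hein' : s(u, v) ∉ (d.edge :: p0.bypass.edges) := by
        intro h
        rcases List.mem_cons.mp h with h | h
        · exact hge h.symm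
        · exact hein h
      rw [Finset.pair_comm]
      exact inter_pair_card_one (List.mem_toFinset.mpr (List.mem_cons_of_mem _ hfin))
        (fun h => hein' (List.mem_toFinset.mp h))
    · -- d crosses the e-cut only
      have hQS : (T.deleteEdges {s(a, b)}).Reachable a d.fst ↔
          (T.deleteEdges {s(a, b)}).Reachable a d.snd := by
        by_contra h
        have himp : ∀ p q : Prop, ¬(p ↔ q) → (p ↔ ¬q) := by tauto
        exact hd1 (((himp _ _ hPR).trans (not_iff_not.mpr hd2')).trans
          (himp _ _ h).symm)
      obtain ⟨p0⟩ := (reach_same_side hTc hab hQS).symm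
      have hp1 : p0.bypass.IsPath := p0.bypass_isPath
      have hsub : ∀ ed ∈ p0.bypass.edges, ed ∈ T.edgeSet := fun ed hed =>
        SimpleGraph.edgeSet_mono (T.deleteEdges_le _) (p0.bypass.edges_subset_edgeSet hed)
      have hein : s(u, v) ∈ p0.bypass.edges := by
        by_contra hfp
        have hreach : (T.deleteEdges {s(u, v)}).Reachable d.snd d.fst :=
          ⟨(p0.bypass.transfer T hsub).toDeleteEdges {s(u, v)} (fun ed hed => by
            rw [SimpleGraph.Walk.edges_transfer] at hed
            simp only [Set.mem_singleton_iff]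
            rintro rfl
            exact hfp hed)⟩
        exact hPR ⟨fun hr => hr.trans hreach.symm, fun hr => hr.trans hreach⟩
      have hfin : s(a, b) ∉ p0.bypass.edges := by
        intro h
        have h2 := p0.bypass.edges_subset_edgeSet h
        rw [SimpleGraph.edgeSet_deleteEdges] at h2
        exact h2.2 rfl
      apply build_cycle hgG hgT hedge (p0.bypass.transfer T hsub) (hp1.transfer hsub)
      rw [SimpleGraph.Walk.edges_transfer]
      have hfin' : s(a, b) ∉ (d.edge :: p0.bypass.edges) := by
        intro h
        rcases List.mem_cons.mp h with h | h
        · exact hgf h.symm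
        · exact hfin h
      exact inter_pair_card_one (List.mem_toFinset.mpr (List.mem_cons_of_mem _ hein))
        (fun h => hfin' (List.mem_toFinset.mp h))
  have haW : (T.deleteEdges {s(u, v)}).Reachable u a ↔
      (T.deleteEdges {s(u, v)}).Reachable u b :=
    ⟨fun hr => hr.trans hTeab.reachable, fun hr => hr.trans hTeab.reachable.symm⟩
  by_cases hA : (T.deleteEdges {s(u, v)}).Reachable u a
  · exact key b a (fun h => hbrF (h.mp (haW.mp hA)))
      (iff_of_true hA (SimpleGraph.Reachable.refl a))
  · exact key a b (fun h => hA (h.mpr (SimpleGraph.Reachable.refl a)))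
      (iff_of_false (fun h => hA (haW.mpr h)) hbrF)

/-- Let `T` be a spanning tree of a finite connected simple graph `G`
and `e, f` distinct non-cut edges. If `{e, f}` is not a cut pair, then some non-tree
edge `g` has a fundamental cycle (the unique cycle of `T ∪ {g}`) containing exactly one
of `e` and `f`. -/
theorem fundamental_cycle_separates_non_cutPair [Fintype V] (G T : SimpleGraph V)
    (hG : G.Connected) (hT : IsSpanningTree G T)
    (e f : Sym2 V) (hef : e ≠ f) (he : e ∈ G.edgeSet) (hf : f ∈ G.edgeSet)
    (hce : ¬IsCutEdge G e) (hcf : ¬IsCutEdge G f) (hnp : ¬IsCutPair G e f) :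
    ∃ g ∈ G.edgeFinset \ T.edgeFinset, ∃ (u : V)
      (w : (T ⊔ SimpleGraph.fromEdgeSet {g}).Walk u u),
        w.IsCycle ∧ (w.edges.toFinset ∩ ({e, f} : Finset (Sym2 V))).card = 1 := by
  have hD : (G.deleteEdges {e, f}).Connected := by
    by_contra h
    exact hnp ⟨hef, he, hf, hce, hcf, h⟩
  clear hnp hce hcf hG
  revert hef he hf hD
  induction e using Sym2.ind
  induction f using Sym2.ind
  rename_i u v a b
  intro hef he hf hD
  by_cases heT : s(u, v) ∈ T.edgeSet
  · by_cases hfT : s(a, b) ∈ T.edgeSet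
    · exact case_both G T hT u v a b hef hD heT hfT
    · have h2 := case_nontree G T hT a b u v hef.symm hf
        (by rw [Set.pair_comm]; exact hD) hfT
      simpa only [Finset.pair_comm s(a, b) s(u, v)] using h2
  · exact case_nontree G T hT u v a b hef he hD heT
end
end

section
/- Let G = (V, E) be a finite connected undirected simple graph, T a spanning tree of G, E_C the set of all cut edges of G, and E'_C a set of edges with E_C ⊆ E'_C ⊆ E(T). If E'_C \ E_C is nonempty, then there exists a non-tree edge of G (an edge in E \ E(T)) whose two endpoints lie in different connected components of T − E'_C. Conversely, if E'_C = E_C, then every non-tree edge of G has both endpoints in the same connected component of T − E'_C. -/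
open scoped Classical symmDiff

noncomputable section

variable {V : Type*}

lemma cross_of_walk (H : SimpleGraph V) (S : Set V) :
    ∀ {x y : V}, H.Walk x y → x ∈ S → y ∉ S →
      ∃ u v : V, H.Adj u v ∧ u ∈ S ∧ v ∉ S := by
  intro x y w
  induction w with
  | nil => intro hx hy; exact absurd hx hy
  | @cons u u' v h p ih =>
    intro hx hy
    by_cases hm : u' ∈ S
    · exact ih hm hy
    · exact ⟨_, _, h, hx, hm⟩

lemma delete_connected (G : SimpleGraph V) {a b : V} (hG : G.Connected)
    (hab : (G.deleteEdges {s(a, b)}).Reachable a b) :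
    (G.deleteEdges {s(a, b)}).Connected := by
  rw [SimpleGraph.connected_iff]
  refine ⟨fun x y => ?_, hG.nonempty⟩
  obtain ⟨w⟩ := hG.preconnected x y
  induction w with
  | nil => rfl
  | @cons u u' v h p ih =>
    refine SimpleGraph.Reachable.trans ?_ ih
    by_cases he : s(u, u') = s(a, b)
    · rcases Sym2.eq_iff.mp he with ⟨rfl, rfl⟩ | ⟨rfl, rfl⟩
      · exact hab
      · exact hab.symm
    · exact SimpleGraph.Adj.reachable
        (by rw [SimpleGraph.deleteEdges_adj]; exact ⟨h, by simpa using he⟩)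

/-- Let `T` be a spanning tree of a finite connected simple graph `G`,
`E_C` the set of cut edges of `G`, and `E_C ⊆ E'_C ⊆ E(T)`. If `E'_C \ E_C` is nonempty,
some non-tree edge of `G` has its endpoints in different components of `T − E'_C`;
conversely, if `E'_C = E_C`, every non-tree edge of `G` has both endpoints in the same
component of `T − E'_C`. -/
theorem verifier_for_cut_edges [Fintype V] (G T : SimpleGraph V)
    (hG : G.Connected) (hT : IsSpanningTree G T)
    (E'C : Set (Sym2 V))
    (hsub : {e : Sym2 V | IsCutEdge G e} ⊆ E'C) (htree : E'C ⊆ T.edgeSet) :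
    ((E'C \ {e : Sym2 V | IsCutEdge G e}).Nonempty →
      ∃ u v : V, G.Adj u v ∧ ¬T.Adj u v ∧ ¬(T.deleteEdges E'C).Reachable u v) ∧
    (E'C = {e : Sym2 V | IsCutEdge G e} →
      ∀ u v : V, G.Adj u v → ¬T.Adj u v → (T.deleteEdges E'C).Reachable u v) := by
  constructor
  · rintro ⟨e, heE, hecut⟩
    have heT : e ∈ T.edgeSet := htree heE
    induction e using Sym2.ind with
    | _ a b =>
    have hTab : T.Adj a b := heT
    have hGab : G.Adj a b := hT.1 hTab
    have hmem : s(a, b) ∈ G.edgeSet := hGab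
    have hconn : (G.deleteEdges {s(a, b)}).Connected := by
      by_contra h
      exact hecut ⟨hmem, h⟩
    obtain ⟨w⟩ := hconn.preconnected a b
    set S : Set V := {x | (T.deleteEdges {s(a, b)}).Reachable a x} with hS
    have haS : a ∈ S := SimpleGraph.Reachable.refl a
    have hbS : b ∉ S := by
      intro hb
      have hbridge : T.IsBridge s(a, b) :=
        SimpleGraph.isAcyclic_iff_forall_adj_isBridge.mp hT.2.IsAcyclic hTab
      exact hbridge hb
    obtain ⟨u, v, huv, huS, hvS⟩ := cross_of_walk _ S w haS hbS
    rw [SimpleGraph.deleteEdges_adj] at huv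
    have hne : s(u, v) ≠ s(a, b) := by simpa using huv.2
    refine ⟨u, v, huv.1, ?_, ?_⟩
    · intro hTuv
      exact hvS (huS.trans (SimpleGraph.Adj.reachable
        (by rw [SimpleGraph.deleteEdges_adj]; exact ⟨hTuv, by simpa using hne⟩)))
    · intro hr
      exact hvS (huS.trans (hr.mono
        (SimpleGraph.deleteEdges_anti (by simpa using heE))))
  · intro hEq u v hGuv hnTuv
    obtain ⟨w⟩ := hT.2.isConnected.preconnected u v
    set tp : T.Walk u v := (w.toPath : T.Walk u v) with htp
    have hpath : tp.IsPath := w.toPath.2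
    have hnotin : ∀ f ∈ tp.edges, f ∉ E'C := by
      intro f hf
      have hfT : f ∈ T.edgeSet := tp.edges_subset_edgeSet hf
      rw [hEq]
      induction f using Sym2.ind with
      | _ a b =>
      have hTab : T.Adj a b := hfT
      have hGab : G.Adj a b := hT.1 hTab
      -- build a cycle in G containing s(a,b)
      have hq : ((tp.mapLe hT.1) : G.Walk u v).IsPath :=
        (SimpleGraph.Walk.mapLe_isPath hT.1).mpr hpath
      have hedges : (tp.mapLe hT.1).edges = tp.edges := by
        have hid : ⇑(SimpleGraph.Hom.ofLE hT.1) = id := rfl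
        simp [SimpleGraph.Walk.mapLe, SimpleGraph.Walk.edges_map, hid, Sym2.map_id, List.map_id]
      have hvu : s(v, u) ∉ ((⟨tp.mapLe hT.1, hq⟩ : G.Path u v) : G.Walk u v).edges := by
        intro hmem
        have : s(v, u) ∈ T.edgeSet := by
          rw [hedges] at hmem
          exact tp.edges_subset_edgeSet hmem
        exact hnTuv this.symm
      have hcyc : (SimpleGraph.Walk.cons hGuv.symm
          ((⟨tp.mapLe hT.1, hq⟩ : G.Path u v) : G.Walk u v)).IsCycle :=
        SimpleGraph.Path.cons_isCycle _ hGuv.symm hvu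
      have hinc : s(a, b) ∈ (SimpleGraph.Walk.cons hGuv.symm
          ((⟨tp.mapLe hT.1, hq⟩ : G.Path u v) : G.Walk u v)).edges := by
        simp only [SimpleGraph.Walk.edges_cons, List.mem_cons]
        right
        rw [hedges]
        exact hf
      have hnotbridge : ¬ G.IsBridge s(a, b) := by
        intro hbridge
        exact ((SimpleGraph.isBridge_iff_mem_and_forall_cycle_notMem hGab).mp hbridge) _ hcyc hinc
      rw [SimpleGraph.isBridge_iff] at hnotbridge
      push_neg at hnotbridge
      have hreach : (G.deleteEdges {s(a, b)}).Reachable a b := hnotbridge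
      intro hcut
      exact hcut.2 (delete_connected G hG hreach)
    exact ⟨(tp.toDeleteEdges E'C hnotin)⟩
end
end
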